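/- arXiv:1309.7111 — 4 statements merged into one kernel-verified Lean document; each statement's English description precedes it below -/
import Mathlib

section
/- For all n ≥ 0, the number of permutations of length n avoiding the vincular pattern 231-4 equals the number of permutations of length n avoiding the vincular pattern 241-3. -/
def badA (v : ℕ) : List ℕ → Bool
  | b :: c :: rest => decide (c < v) && decide (v < b) && rest.any (fun x => decide (b < x))
  | _ => false

def badB (v : ℕ) : List ℕ → Bool
  | b :: c :: rest => decide (c < v) && decide (v < b) && rest.any (fun x => decide (v < x) && decide (x < b))
  | _ => false

def contA : List ℕ → Bool
  | [] => false
  | v :: t => contA t || badA v t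

def contB : List ℕ → Bool
  | [] => false
  | v :: t => contB t || badB v t

lemma badA_iff (v : ℕ) (t : List ℕ) :
    badA v t = true ↔ ∃ b c rest, t = b :: c :: rest ∧ c < v ∧ v < b ∧ ∃ x ∈ rest, b < x := by
  match t with
  | [] => simp [badA]
  | [b] => simp [badA]
  | b :: c :: rest =>
    simp only [badA, Bool.and_eq_true, decide_eq_true_eq, List.any_eq_true]
    constructor
    · rintro ⟨⟨h1, h2⟩, x, hx, h3⟩
      exact ⟨b, c, rest, rfl, h1, h2, x, hx, by simpa using h3⟩
    · rintro ⟨b', c', r', heq, h1, h2, x, hx, h3⟩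
      obtain ⟨rfl, rfl, rfl⟩ : b = b' ∧ c = c' ∧ rest = r' := by
        simpa using heq
      exact ⟨⟨h1, h2⟩, x, hx, by simpa using h3⟩

lemma badB_iff (v : ℕ) (t : List ℕ) :
    badB v t = true ↔ ∃ b c rest, t = b :: c :: rest ∧ c < v ∧ v < b ∧ ∃ x ∈ rest, v < x ∧ x < b := by
  match t with
  | [] => simp [badB]
  | [b] => simp [badB]
  | b :: c :: rest =>
    simp only [badB, Bool.and_eq_true, decide_eq_true_eq, List.any_eq_true]
    constructor
    · rintro ⟨⟨h1, h2⟩, x, hx, h3⟩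
      exact ⟨b, c, rest, rfl, h1, h2, x, hx, by simpa using h3⟩
    · rintro ⟨b', c', r', heq, h1, h2, x, hx, h3⟩
      obtain ⟨rfl, rfl, rfl⟩ : b = b' ∧ c = c' ∧ rest = r' := by
        simpa using heq
      exact ⟨⟨h1, h2⟩, x, hx, by simpa using h3⟩

lemma contA_iff (l : List ℕ) : contA l = true ↔
    ∃ i j, ∃ (h2 : i + 2 < l.length) (hj : j < l.length),
      i + 2 < j ∧ l[i+2] < l[i] ∧ l[i] < l[i+1] ∧ l[i+1] < l[j] := by
  induction l with
  | nil => simp [contA]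
  | cons v t ih =>
    rw [show contA (v :: t) = (contA t || badA v t) from rfl]
    rw [Bool.or_eq_true, ih, badA_iff]
    constructor
    · rintro (⟨i, j, h2, hj, hij, p1, p2, p3⟩ | ⟨b, c, rest, ht, hc, hv, x, hx, hbx⟩)
      · refine ⟨i+1, j+1, by simp; omega, by simp; omega, by omega, ?_, ?_, ?_⟩ <;>
          simpa [List.getElem_cons_succ] using ‹_›
      · subst ht
        obtain ⟨k, hk, hxk⟩ := List.mem_iff_getElem.mp hx
        refine ⟨0, k + 3, by simp, by simp; omega, by omega, ?_, ?_, ?_⟩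
        · simpa using hc
        · simpa using hv
        · have : (v :: b :: c :: rest)[k+3]'(by simp; omega) = rest[k] := by
            simp [List.getElem_cons_succ]
          rw [this, hxk]
          simpa using hbx
    · rintro ⟨i, j, h2, hj, hij, p1, p2, p3⟩
      match i with
      | 0 =>
        match t, h2, hj, p1, p2, p3 with
        | b :: c :: rest, h2, hj, p1, p2, p3 =>
          right
          refine ⟨b, c, rest, rfl, by simpa using p1, by simpa using p2, ?_⟩
          have hj3 : 3 ≤ j := by omega
          have hjr : j - 3 < rest.length := by simp at hj; omega
          refine ⟨rest[j-3], List.getElem_mem _, ?_⟩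
          have : (v :: b :: c :: rest)[j]'hj = rest[j-3] := by
            obtain ⟨m, rfl⟩ : ∃ m, j = m + 3 := ⟨j - 3, by omega⟩
            simp [List.getElem_cons_succ]
          rw [this] at p3
          simpa using p3
      | i + 1 =>
        left
        have hj1 : 1 ≤ j := by omega
        obtain ⟨m, rfl⟩ : ∃ m, j = m + 1 := ⟨j - 1, by omega⟩
        refine ⟨i, m, by simp at h2; omega, by simp at hj; omega, by omega, ?_, ?_, ?_⟩ <;>
          simpa [List.getElem_cons_succ] using ‹_›
lemma contB_iff (l : List ℕ) : contB l = true ↔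
    ∃ i j, ∃ (h2 : i + 2 < l.length) (hj : j < l.length),
      i + 2 < j ∧ l[i+2] < l[i] ∧ l[i] < l[j] ∧ l[j] < l[i+1] := by
  induction l with
  | nil => simp [contB]
  | cons v t ih =>
    rw [show contB (v :: t) = (contB t || badB v t) from rfl]
    rw [Bool.or_eq_true, ih, badB_iff]
    constructor
    · rintro (⟨i, j, h2, hj, hij, p1, p2, p3⟩ | ⟨b, c, rest, ht, hc, hv, x, hx, hvx, hxb⟩)
      · refine ⟨i+1, j+1, by simp; omega, by simp; omega, by omega, ?_, ?_, ?_⟩ <;>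
          simpa [List.getElem_cons_succ] using ‹_›
      · subst ht
        obtain ⟨k, hk, hxk⟩ := List.mem_iff_getElem.mp hx
        have hg : (v :: b :: c :: rest)[k+3]'(by simp; omega) = rest[k] := by
          simp [List.getElem_cons_succ]
        refine ⟨0, k + 3, by simp, by simp; omega, by omega, ?_, ?_, ?_⟩
        · simpa using hc
        · rw [hg, hxk]; simpa using hvx
        · rw [hg, hxk]; simpa using hxb
    · rintro ⟨i, j, h2, hj, hij, p1, p2, p3⟩
      match i with
      | 0 =>
        match t, h2, hj, p1, p2, p3 with
        | b :: c :: rest, h2, hj, p1, p2, p3 =>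
          right
          refine ⟨b, c, rest, rfl, by simpa using p1, ?_, ?_⟩
          · have hj3 : 3 ≤ j := by omega
            have hjr : j - 3 < rest.length := by simp at hj; omega
            have hg : (v :: b :: c :: rest)[j]'hj = rest[j-3] := by
              obtain ⟨m, rfl⟩ : ∃ m, j = m + 3 := ⟨j - 3, by omega⟩
              simp [List.getElem_cons_succ]
            rw [hg] at p2 p3
            exact lt_trans (by simpa using p2) (by simpa using p3)
          · have hj3 : 3 ≤ j := by omega
            have hjr : j - 3 < rest.length := by simp at hj; omega
            have hg : (v :: b :: c :: rest)[j]'hj = rest[j-3] := by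
              obtain ⟨m, rfl⟩ : ∃ m, j = m + 3 := ⟨j - 3, by omega⟩
              simp [List.getElem_cons_succ]
            rw [hg] at p2 p3
            exact ⟨rest[j-3], List.getElem_mem _, by simpa using p2, by simpa using p3⟩
      | i + 1 =>
        left
        have hj1 : 1 ≤ j := by omega
        obtain ⟨m, rfl⟩ : ∃ m, j = m + 1 := ⟨j - 1, by omega⟩
        refine ⟨i, m, by simp at h2; omega, by simp at hj; omega, by omega, ?_, ?_, ?_⟩ <;>
          simpa [List.getElem_cons_succ] using ‹_›

def Contains231d4 {n : ℕ} (π : Fin n → Fin n) : Prop :=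
  ∃ (i j : ℕ) (h2 : i + 2 < n) (hj : j < n),
    i + 2 < j ∧
    π ⟨i + 2, h2⟩ < π ⟨i, by omega⟩ ∧
    π ⟨i, by omega⟩ < π ⟨i + 1, by omega⟩ ∧
    π ⟨i + 1, by omega⟩ < π ⟨j, hj⟩

def Contains241d3 {n : ℕ} (π : Fin n → Fin n) : Prop :=
  ∃ (i j : ℕ) (h2 : i + 2 < n) (hj : j < n),
    i + 2 < j ∧
    π ⟨i + 2, h2⟩ < π ⟨i, by omega⟩ ∧
    π ⟨i, by omega⟩ < π ⟨j, hj⟩ ∧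
    π ⟨j, hj⟩ < π ⟨i + 1, by omega⟩

def toL {n : ℕ} (π : Fin n → Fin n) : List ℕ := List.ofFn (fun i => (π i : ℕ))

lemma toL_length {n : ℕ} (π : Fin n → Fin n) : (toL π).length = n := by simp [toL]

lemma toL_get {n : ℕ} (π : Fin n → Fin n) (i : ℕ) (h : i < (toL π).length) :
    (toL π)[i] = (π ⟨i, by simpa [toL] using h⟩ : ℕ) := by
  simp [toL]

lemma contains231_iff_contA {n : ℕ} (π : Fin n → Fin n) :
    Contains231d4 π ↔ contA (toL π) = true := by
  rw [contA_iff]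
  constructor
  · rintro ⟨i, j, h2, hj, hij, p1, p2, p3⟩
    refine ⟨i, j, by simpa [toL] using h2, by simpa [toL] using hj, hij, ?_, ?_, ?_⟩ <;>
      · rw [toL_get, toL_get]; exact_mod_cast ‹_›
  · rintro ⟨i, j, h2, hj, hij, p1, p2, p3⟩
    rw [toL_get, toL_get] at p1 p2 p3
    exact ⟨i, j, by simpa [toL] using h2, by simpa [toL] using hj, hij,
      by exact_mod_cast p1, by exact_mod_cast p2, by exact_mod_cast p3⟩

lemma contains241_iff_contB {n : ℕ} (π : Fin n → Fin n) :
    Contains241d3 π ↔ contB (toL π) = true := by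
  rw [contB_iff]
  constructor
  · rintro ⟨i, j, h2, hj, hij, p1, p2, p3⟩
    refine ⟨i, j, by simpa [toL] using h2, by simpa [toL] using hj, hij, ?_, ?_, ?_⟩ <;>
      · rw [toL_get, toL_get]; exact_mod_cast ‹_›
  · rintro ⟨i, j, h2, hj, hij, p1, p2, p3⟩
    rw [toL_get, toL_get] at p1 p2 p3
    exact ⟨i, j, by simpa [toL] using h2, by simpa [toL] using hj, hij,
      by exact_mod_cast p1, by exact_mod_cast p2, by exact_mod_cast p3⟩
def permsOf (n : ℕ) : Finset (List ℕ) := (List.range n).permutations.toFinset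

lemma mem_permsOf {n : ℕ} {l : List ℕ} : l ∈ permsOf n ↔ l.Perm (List.range n) := by
  simp [permsOf, List.mem_permutations]

def avA (n : ℕ) : Finset (List ℕ) := (permsOf n).filter (fun l => contA l = false)
def avB (n : ℕ) : Finset (List ℕ) := (permsOf n).filter (fun l => contB l = false)

def sndLT (a : ℕ) : List ℕ → Bool
  | _ :: c :: _ => decide (c < a)
  | _ => false

def fA (n a b : ℕ) : ℕ := ((avA n).filter (fun l => l.take 2 = [a, b])).card
def fB (n a b : ℕ) : ℕ := ((avB n).filter (fun l => l.take 2 = [a, b])).card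
def gA (n a : ℕ) : ℕ := ((avA n).filter (fun l => l.head? = some a)).card
def gB (n a : ℕ) : ℕ := ((avB n).filter (fun l => l.head? = some a)).card
def eA (n r a : ℕ) : ℕ := ((avA n).filter (fun l => l.head? = some r ∧ sndLT a l = true)).card
def eB (n r a : ℕ) : ℕ := ((avB n).filter (fun l => l.head? = some r ∧ sndLT a l = true)).card
def NA (n : ℕ) : ℕ := (avA n).card
def NB (n : ℕ) : ℕ := (avB n).card


lemma badA_cons (v b c : ℕ) (rest : List ℕ) :
    badA v (b :: c :: rest) = (decide (c < v) && decide (v < b) && rest.any (fun x => decide (b < x))) := rfl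

lemma badB_cons (v b c : ℕ) (rest : List ℕ) :
    badB v (b :: c :: rest)
      = (decide (c < v) && decide (v < b) && rest.any (fun x => decide (v < x) && decide (x < b))) := rfl

section invariance

variable (φ : ℕ → ℕ)

set_option maxRecDepth 10000 in
lemma badA_map (v : ℕ) (t : List ℕ)
    (h : ∀ x ∈ v :: t, ∀ y ∈ v :: t, (x < y ↔ φ x < φ y)) :
    badA (φ v) (t.map φ) = badA v t := by
  match t with
  | [] => rfl
  | [b] => rfl
  | b :: c :: rest =>
    rw [Bool.eq_iff_iff]
    simp only [List.map_cons, badA_cons, List.any_map, Bool.and_eq_true,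
      decide_eq_true_eq, List.any_eq_true, Function.comp_def]
    have hb : b ∈ v :: b :: c :: rest := by simp
    have hc : c ∈ v :: b :: c :: rest := by simp
    have hv : v ∈ v :: b :: c :: rest := by simp
    constructor
    · rintro ⟨⟨h1, h2⟩, x, hx, h3⟩
      have hxm : x ∈ v :: b :: c :: rest := by simp [hx]
      exact ⟨⟨(h _ hc _ hv).mpr h1, (h _ hv _ hb).mpr h2⟩, x, hx, (h _ hb _ hxm).mpr (by simpa using h3)⟩
    · rintro ⟨⟨h1, h2⟩, x, hx, h3⟩
      have hxm : x ∈ v :: b :: c :: rest := by simp [hx]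
      exact ⟨⟨(h _ hc _ hv).mp h1, (h _ hv _ hb).mp h2⟩, x, hx, by simpa using (h _ hb _ hxm).mp h3⟩

set_option maxRecDepth 10000 in
lemma badB_map (v : ℕ) (t : List ℕ)
    (h : ∀ x ∈ v :: t, ∀ y ∈ v :: t, (x < y ↔ φ x < φ y)) :
    badB (φ v) (t.map φ) = badB v t := by
  match t with
  | [] => rfl
  | [b] => rfl
  | b :: c :: rest =>
    rw [Bool.eq_iff_iff]
    simp only [List.map_cons, badB_cons, List.any_map, Bool.and_eq_true,
      decide_eq_true_eq, List.any_eq_true, Function.comp_def]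
    have hb : b ∈ v :: b :: c :: rest := by simp
    have hc : c ∈ v :: b :: c :: rest := by simp
    have hv : v ∈ v :: b :: c :: rest := by simp
    constructor
    · rintro ⟨⟨h1, h2⟩, x, hx, h3⟩
      have hxm : x ∈ v :: b :: c :: rest := by simp [hx]
      have h3' : φ v < φ x ∧ φ x < φ b := by simpa using h3
      exact ⟨⟨(h _ hc _ hv).mpr h1, (h _ hv _ hb).mpr h2⟩, x, hx,
        by simp [(h _ hv _ hxm).mpr h3'.1, (h _ hxm _ hb).mpr h3'.2]⟩
    · rintro ⟨⟨h1, h2⟩, x, hx, h3⟩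
      have hxm : x ∈ v :: b :: c :: rest := by simp [hx]
      have h3' : v < x ∧ x < b := by simpa using h3
      exact ⟨⟨(h _ hc _ hv).mp h1, (h _ hv _ hb).mp h2⟩, x, hx,
        by simp [(h _ hv _ hxm).mp h3'.1, (h _ hxm _ hb).mp h3'.2]⟩

lemma contA_map (t : List ℕ)
    (h : ∀ x ∈ t, ∀ y ∈ t, (x < y ↔ φ x < φ y)) :
    contA (t.map φ) = contA t := by
  induction t with
  | nil => rfl
  | cons v t ih =>
    have h' : ∀ x ∈ t, ∀ y ∈ t, (x < y ↔ φ x < φ y) := by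
      intro x hx y hy; exact h x (by simp [hx]) y (by simp [hy])
    show (contA (t.map φ) || badA (φ v) (t.map φ)) = (contA t || badA v t)
    rw [ih h', badA_map φ v t h]

lemma contB_map (t : List ℕ)
    (h : ∀ x ∈ t, ∀ y ∈ t, (x < y ↔ φ x < φ y)) :
    contB (t.map φ) = contB t := by
  induction t with
  | nil => rfl
  | cons v t ih =>
    have h' : ∀ x ∈ t, ∀ y ∈ t, (x < y ↔ φ x < φ y) := by
      intro x hx y hy; exact h x (by simp [hx]) y (by simp [hy])
    show (contB (t.map φ) || badB (φ v) (t.map φ)) = (contB t || badB v t)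
    rw [ih h', badB_map φ v t h]

end invariance
def delm (a x : ℕ) : ℕ := if a < x then x - 1 else x
def insm (a x : ℕ) : ℕ := if a ≤ x then x + 1 else x

lemma delm_insm (a x : ℕ) : delm a (insm a x) = x := by unfold delm insm; split_ifs <;> omega
lemma insm_delm {a x : ℕ} (h : x ≠ a) : insm a (delm a x) = x := by
  unfold delm insm; split_ifs <;> omega
lemma insm_ne (a x : ℕ) : insm a x ≠ a := by unfold insm; split_ifs <;> omega
lemma insm_lt_iff (a x y : ℕ) : x < y ↔ insm a x < insm a y := by
  unfold insm; split_ifs <;> omega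
lemma delm_lt_iff {a x y : ℕ} (hx : x ≠ a) (hy : y ≠ a) : x < y ↔ delm a x < delm a y := by
  unfold delm; split_ifs <;> omega
lemma delm_lt_left {a x : ℕ} (hx : x ≠ a) : x < a ↔ delm a x < a := by
  unfold delm; split_ifs <;> omega

lemma nodup_of_permsOf {n : ℕ} {l : List ℕ} (h : l ∈ permsOf n) : l.Nodup :=
  (mem_permsOf.mp h).nodup_iff.mpr List.nodup_range

lemma lt_of_mem_permsOf {n : ℕ} {l : List ℕ} (h : l ∈ permsOf n) {x : ℕ} (hx : x ∈ l) : x < n := by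
  have := (mem_permsOf.mp h).mem_iff.mp hx
  simpa using this

lemma mem_of_lt_permsOf {n : ℕ} {l : List ℕ} (h : l ∈ permsOf n) {x : ℕ} (hx : x < n) : x ∈ l :=
  (mem_permsOf.mp h).mem_iff.mpr (by simpa using hx)

lemma length_of_permsOf {n : ℕ} {l : List ℕ} (h : l ∈ permsOf n) : l.length = n := by
  simpa using (mem_permsOf.mp h).length_eq

lemma head_cons_of_permsOf {l : List ℕ} {a : ℕ} (h : l.head? = some a) :
    ∃ t, l = a :: t := by
  cases l with
  | nil => simp at h
  | cons x t => exact ⟨t, by simp_all⟩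

/-- membership in the tail -/
lemma mem_tail_iff {n a : ℕ} {t : List ℕ} (h : (a :: t) ∈ permsOf (n+1)) {x : ℕ} :
    x ∈ t ↔ x < n + 1 ∧ x ≠ a := by
  have hnd := nodup_of_permsOf h
  have hna : a ∉ t := by simp [List.nodup_cons] at hnd; exact hnd.1
  constructor
  · intro hx
    refine ⟨lt_of_mem_permsOf h (by simp [hx]), ?_⟩
    rintro rfl; exact hna hx
  · rintro ⟨h1, h2⟩
    have := mem_of_lt_permsOf h h1
    simp at this
    tauto

lemma tail_map_mem_permsOf {n a : ℕ} {t : List ℕ} (h : (a :: t) ∈ permsOf (n+1)) :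
    t.map (delm a) ∈ permsOf n := by
  have hnd := nodup_of_permsOf h
  have hndt : t.Nodup := (List.nodup_cons.mp hnd).2
  have hna : a ∉ t := (List.nodup_cons.mp hnd).1
  rw [mem_permsOf]
  apply List.perm_of_nodup_nodup_toFinset_eq
  · apply hndt.map_on
    intro x hx y hy hxy
    have hxa : x ≠ a := fun h' => hna (h' ▸ hx)
    have hya : y ≠ a := fun h' => hna (h' ▸ hy)
    by_contra hne
    rcases Nat.lt_or_ge x y with h' | h'
    · exact absurd ((delm_lt_iff hxa hya).mp h') (by omega)
    · have : y < x := by omega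
      exact absurd ((delm_lt_iff hya hxa).mp this) (by omega)
  · exact List.nodup_range
  · ext x
    simp only [List.mem_toFinset, List.mem_map, List.mem_range]
    constructor
    · rintro ⟨y, hy, rfl⟩
      have h1 := (mem_tail_iff h).mp hy
      have han : a < n + 1 := lt_of_mem_permsOf h (by simp)
      unfold delm; split_ifs <;> omega
    · intro hx
      by_cases hxa : x < a
      · refine ⟨x, (mem_tail_iff h).mpr ⟨by omega, by omega⟩, ?_⟩
        unfold delm; split_ifs <;> omega
      · refine ⟨x + 1, (mem_tail_iff h).mpr ⟨by omega, by omega⟩, ?_⟩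
        unfold delm; split_ifs <;> omega

lemma cons_map_mem_permsOf {n a : ℕ} (han : a ≤ n) {τ : List ℕ} (h : τ ∈ permsOf n) :
    (a :: τ.map (insm a)) ∈ permsOf (n + 1) := by
  have hnd := nodup_of_permsOf h
  rw [mem_permsOf]
  apply List.perm_of_nodup_nodup_toFinset_eq
  · rw [List.nodup_cons]
    constructor
    · intro hmem
      obtain ⟨y, _, hy⟩ := List.mem_map.mp hmem
      exact insm_ne a y hy
    · apply hnd.map_on
      intro x _ y _ hxy
      by_contra hne
      rcases Nat.lt_or_ge x y with h' | h'
      · exact absurd ((insm_lt_iff a x y).mp h') (by omega)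
      · have : y < x := by omega
        exact absurd ((insm_lt_iff a y x).mp this) (by omega)
  · exact List.nodup_range
  · ext x
    simp only [List.mem_toFinset, List.mem_cons, List.mem_map, List.mem_range]
    constructor
    · rintro (rfl | ⟨y, hy, rfl⟩)
      · omega
      · have := lt_of_mem_permsOf h hy
        unfold insm; split_ifs <;> omega
    · intro hx
      rcases Nat.lt_trichotomy x a with h' | h' | h'
      · right
        exact ⟨x, mem_of_lt_permsOf h (by omega), by unfold insm; split_ifs <;> omega⟩
      · left; omega
      · right
        refine ⟨x - 1, mem_of_lt_permsOf h (by omega), by unfold insm; split_ifs <;> omega⟩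

lemma FG_id {a : ℕ} (τ : List ℕ) : (τ.map (insm a)).map (delm a) = τ := by
  rw [List.map_map]
  have : delm a ∘ insm a = id := funext fun x => delm_insm a x
  rw [this, List.map_id]

lemma GF_id {n a : ℕ} {t : List ℕ} (h : (a :: t) ∈ permsOf (n+1)) :
    (t.map (delm a)).map (insm a) = t := by
  rw [List.map_map]
  have : ∀ x ∈ t, (insm a ∘ delm a) x = id x := by
    intro x hx
    have : x ≠ a := ((mem_tail_iff h).mp hx).2
    exact insm_delm this
  rw [List.map_congr_left this, List.map_id]
lemma contA_tail_map {n a : ℕ} {t : List ℕ} (h : (a :: t) ∈ permsOf (n+1)) :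
    contA (t.map (delm a)) = contA t := by
  apply contA_map
  intro x hx y hy
  exact delm_lt_iff ((mem_tail_iff h).mp hx).2 ((mem_tail_iff h).mp hy).2

lemma contB_tail_map {n a : ℕ} {t : List ℕ} (h : (a :: t) ∈ permsOf (n+1)) :
    contB (t.map (delm a)) = contB t := by
  apply contB_map
  intro x hx y hy
  exact delm_lt_iff ((mem_tail_iff h).mp hx).2 ((mem_tail_iff h).mp hy).2

lemma contA_cons_decomp {n a : ℕ} {t : List ℕ} (h : (a :: t) ∈ permsOf (n+1)) :
    contA (a :: t) = false ↔ (contA (t.map (delm a)) = false ∧ badA a t = false) := by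
  show (contA t || badA a t) = false ↔ _
  rw [contA_tail_map h, Bool.or_eq_false_iff]

lemma contB_cons_decomp {n a : ℕ} {t : List ℕ} (h : (a :: t) ∈ permsOf (n+1)) :
    contB (a :: t) = false ↔ (contB (t.map (delm a)) = false ∧ badB a t = false) := by
  show (contB t || badB a t) = false ↔ _
  rw [contB_tail_map h, Bool.or_eq_false_iff]

lemma badA_char {n a b c : ℕ} {rest : List ℕ} (h : (a :: b :: c :: rest) ∈ permsOf (n+1)) :
    badA a (b :: c :: rest) = true ↔ (c < a ∧ a < b ∧ b < n) := by
  rw [badA_iff]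
  constructor
  · rintro ⟨b', c', rest', heq, h1, h2, x, hx, h3⟩
    obtain ⟨rfl, rfl, rfl⟩ : b = b' ∧ c = c' ∧ rest = rest' := by simpa using heq
    have hxn : x < n + 1 := lt_of_mem_permsOf h (by simp [hx])
    exact ⟨h1, h2, by omega⟩
  · rintro ⟨h1, h2, h3⟩
    refine ⟨b, c, rest, rfl, h1, h2, n, ?_, by omega⟩
    have hn : n ∈ a :: b :: c :: rest := mem_of_lt_permsOf h (by omega)
    simp only [List.mem_cons] at hn
    rcases hn with rfl | rfl | rfl | hn
    · omega
    · omega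
    · omega
    · exact hn

lemma badB_char {n a b c : ℕ} {rest : List ℕ} (h : (a :: b :: c :: rest) ∈ permsOf (n+1)) :
    badB a (b :: c :: rest) = true ↔ (c < a ∧ a + 1 < b) := by
  rw [badB_iff]
  constructor
  · rintro ⟨b', c', rest', heq, h1, h2, x, hx, h3, h4⟩
    obtain ⟨rfl, rfl, rfl⟩ : b = b' ∧ c = c' ∧ rest = rest' := by simpa using heq
    exact ⟨h1, by omega⟩
  · rintro ⟨h1, h2⟩
    refine ⟨b, c, rest, rfl, h1, by omega, a + 1, ?_, by omega, by omega⟩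
    have hbn : b < n + 1 := lt_of_mem_permsOf h (by simp)
    have hn : a + 1 ∈ a :: b :: c :: rest := mem_of_lt_permsOf h (by omega)
    simp only [List.mem_cons] at hn
    rcases hn with h' | h' | h' | hn
    · omega
    · omega
    · omega
    · exact hn

lemma take2_iff {l : List ℕ} {a b : ℕ} : l.take 2 = [a, b] ↔ ∃ rest, l = a :: b :: rest := by
  match l with
  | [] => simp
  | [x] => simp
  | x :: y :: rest =>
    constructor
    · intro h'
      obtain ⟨rfl, rfl⟩ : x = a ∧ y = b := by simpa using h'
      exact ⟨rest, rfl⟩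
    · rintro ⟨rest', heq⟩
      obtain ⟨rfl, rfl, rfl⟩ : x = a ∧ y = b ∧ rest = rest' := by simpa using heq
      rfl

lemma head2_of_len {t : List ℕ} {b : ℕ} (h : t.head? = some b) (hl : 2 ≤ t.length) :
    ∃ c rest, t = b :: c :: rest := by
  match t with
  | [] => simp at h
  | [x] => simp at hl
  | x :: y :: rest =>
    obtain rfl : x = b := by simpa using h
    exact ⟨y, rest, rfl⟩

/-- The master bijection. -/
lemma key_bij (n a b : ℕ) (hab : a ≠ b) (han : a ≤ n)
    (r : List ℕ → Bool) (q : List ℕ → Prop) [DecidablePred q]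
    (hrq : ∀ t : List ℕ, (a :: t) ∈ permsOf (n+1) → t.head? = some b →
      (r (a :: t) = false ↔ q (t.map (delm a)))) :
    ((permsOf (n+1)).filter (fun l => r l = false ∧ l.take 2 = [a, b])).card =
    ((permsOf n).filter (fun τ => q τ ∧ τ.head? = some (delm a b))).card := by
  apply Finset.card_bij' (i := fun l _ => l.tail.map (delm a))
    (j := fun τ _ => a :: τ.map (insm a))
  · intro l hl
    rw [Finset.mem_filter] at hl
    obtain ⟨hmem, hr, htk⟩ := hl
    obtain ⟨rest, rfl⟩ := take2_iff.mp htk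
    rw [Finset.mem_filter]
    refine ⟨tail_map_mem_permsOf hmem, ?_, ?_⟩
    · exact (hrq _ hmem (by simp)).mp hr
    · simp
  · intro τ hτ
    rw [Finset.mem_filter] at hτ
    obtain ⟨hmem, hq, hhd⟩ := hτ
    obtain ⟨rest, rfl⟩ := head_cons_of_permsOf hhd
    rw [Finset.mem_filter]
    have hmem' := cons_map_mem_permsOf han hmem
    refine ⟨hmem', ?_, ?_⟩
    · rw [hrq _ hmem' (by rw [List.map_cons]; simp [insm_delm hab.symm]), FG_id]
      exact hq
    · rw [take2_iff]
      exact ⟨rest.map (insm a), by rw [List.map_cons, insm_delm hab.symm]⟩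
  · intro l hl
    rw [Finset.mem_filter] at hl
    obtain ⟨hmem, hr, htk⟩ := hl
    obtain ⟨rest, rfl⟩ := take2_iff.mp htk
    simp only [List.tail_cons]
    rw [GF_id hmem]
  · intro τ hτ
    simp only [List.tail_cons]
    rw [FG_id]

/-- rewriting the counters as filters of permsOf -/
lemma fA_eq (n a b : ℕ) :
    fA n a b = ((permsOf n).filter (fun l => contA l = false ∧ l.take 2 = [a, b])).card := by
  unfold fA avA; rw [Finset.filter_filter]
lemma fB_eq (n a b : ℕ) :
    fB n a b = ((permsOf n).filter (fun l => contB l = false ∧ l.take 2 = [a, b])).card := by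
  unfold fB avB; rw [Finset.filter_filter]
lemma gA_eq (n r : ℕ) :
    gA n r = ((permsOf n).filter (fun l => contA l = false ∧ l.head? = some r)).card := by
  unfold gA avA; rw [Finset.filter_filter]
lemma gB_eq (n r : ℕ) :
    gB n r = ((permsOf n).filter (fun l => contB l = false ∧ l.head? = some r)).card := by
  unfold gB avB; rw [Finset.filter_filter]
lemma sndLT_map_delm {a b c : ℕ} (rest : List ℕ) (hca : c ≠ a) :
    sndLT a ((b :: c :: rest).map (delm a)) = true ↔ c < a := by
  show (decide (delm a c < a)) = true ↔ _
  rw [decide_eq_true_eq]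
  exact (delm_lt_left hca).symm

lemma recA1 (n a b : ℕ) (hba : b < a) (han : a ≤ n) : fA (n+1) a b = gA n b := by
  have hd : delm a b = b := by unfold delm; split_ifs <;> omega
  rw [fA_eq, gA_eq]
  have hkey := key_bij n a b (show a ≠ b by omega) han contA (fun τ => contA τ = false) ?_
  · rw [hd] at hkey; exact hkey
  intro t hmem hhd
  rw [contA_cons_decomp hmem]
  have hbad : badA a t = false := by
    rw [Bool.eq_false_iff]
    intro hb
    obtain ⟨b', c', rest', heq, h1, h2, -⟩ := (badA_iff a t).mp hb
    rw [heq] at hhd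
    obtain rfl : b' = b := by simpa using hhd
    omega
  simp [hbad]

lemma recB1 (n a b : ℕ) (hba : b < a) (han : a ≤ n) : fB (n+1) a b = gB n b := by
  have hd : delm a b = b := by unfold delm; split_ifs <;> omega
  rw [fB_eq, gB_eq]
  have hkey := key_bij n a b (show a ≠ b by omega) han contB (fun τ => contB τ = false) ?_
  · rw [hd] at hkey; exact hkey
  intro t hmem hhd
  rw [contB_cons_decomp hmem]
  have hbad : badB a t = false := by
    rw [Bool.eq_false_iff]
    intro hb
    obtain ⟨b', c', rest', heq, h1, h2, -⟩ := (badB_iff a t).mp hb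
    rw [heq] at hhd
    obtain rfl : b' = b := by simpa using hhd
    omega
  simp [hbad]

lemma recA3 (n a : ℕ) (han : a < n) : fA (n+1) a n = gA n (n-1) := by
  have hd : delm a n = n - 1 := by unfold delm; split_ifs <;> omega
  rw [fA_eq, gA_eq]
  have hkey := key_bij n a n (show a ≠ n by omega) (by omega) contA (fun τ => contA τ = false) ?_
  · rw [hd] at hkey; exact hkey
  intro t hmem hhd
  rw [contA_cons_decomp hmem]
  have hbad : badA a t = false := by
    rw [Bool.eq_false_iff]
    intro hb
    obtain ⟨b', c', rest', heq, h1, h2, x, hx, h3⟩ := (badA_iff a t).mp hb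
    rw [heq] at hhd
    have hb'n : b' = n := by simpa using hhd
    have : x < n + 1 := lt_of_mem_permsOf hmem (by simp [heq, hx])
    omega
  simp [hbad]

lemma recB3 (n a : ℕ) (han : a < n) : fB (n+1) a (a+1) = gB n a := by
  have hd : delm a (a+1) = a := by unfold delm; split_ifs <;> omega
  rw [fB_eq, gB_eq]
  have hkey := key_bij n a (a+1) (show a ≠ a+1 by omega) (by omega) contB (fun τ => contB τ = false) ?_
  · rw [hd] at hkey; exact hkey
  intro t hmem hhd
  rw [contB_cons_decomp hmem]
  have hbad : badB a t = false := by
    rw [Bool.eq_false_iff]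
    intro hb
    obtain ⟨b', c', rest', heq, h1, h2, x, hx, h3, h4⟩ := (badB_iff a t).mp hb
    rw [heq] at hhd
    obtain rfl : b' = a + 1 := by simpa using hhd
    omega
  simp [hbad]

lemma eA_eq (n r a : ℕ) :
    eA n r a = ((permsOf n).filter
      (fun l => contA l = false ∧ l.head? = some r ∧ sndLT a l = true)).card := by
  unfold eA avA; rw [Finset.filter_filter]
lemma eB_eq (n r a : ℕ) :
    eB n r a = ((permsOf n).filter
      (fun l => contB l = false ∧ l.head? = some r ∧ sndLT a l = true)).card := by
  unfold eB avB; rw [Finset.filter_filter]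

lemma g_split_A (n r a : ℕ) :
    ((permsOf n).filter
      (fun τ => (contA τ = false ∧ sndLT a τ = false) ∧ τ.head? = some r)).card
      + eA n r a = gA n r := by
  rw [eA_eq, gA_eq]
  have h := Finset.card_filter_add_card_filter_not
    (s := (permsOf n).filter (fun l => contA l = false ∧ l.head? = some r))
    (p := fun l => sndLT a l = true)
  rw [Finset.filter_filter, Finset.filter_filter] at h
  have e1 : (permsOf n).filter (fun τ => (contA τ = false ∧ τ.head? = some r) ∧ sndLT a τ = true)
      = (permsOf n).filter (fun l => contA l = false ∧ l.head? = some r ∧ sndLT a l = true) :=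
    Finset.filter_congr (fun x _ => by tauto)
  have e2 : (permsOf n).filter (fun τ => (contA τ = false ∧ τ.head? = some r) ∧ ¬ sndLT a τ = true)
      = (permsOf n).filter (fun τ => (contA τ = false ∧ sndLT a τ = false) ∧ τ.head? = some r) :=
    Finset.filter_congr (fun x _ => by simp only [Bool.not_eq_true]; tauto)
  rw [e1, e2] at h
  omega

lemma g_split_B (n r a : ℕ) :
    ((permsOf n).filter
      (fun τ => (contB τ = false ∧ sndLT a τ = false) ∧ τ.head? = some r)).card
      + eB n r a = gB n r := by
  rw [eB_eq, gB_eq]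
  have h := Finset.card_filter_add_card_filter_not
    (s := (permsOf n).filter (fun l => contB l = false ∧ l.head? = some r))
    (p := fun l => sndLT a l = true)
  rw [Finset.filter_filter, Finset.filter_filter] at h
  have e1 : (permsOf n).filter (fun τ => (contB τ = false ∧ τ.head? = some r) ∧ sndLT a τ = true)
      = (permsOf n).filter (fun l => contB l = false ∧ l.head? = some r ∧ sndLT a l = true) :=
    Finset.filter_congr (fun x _ => by tauto)
  have e2 : (permsOf n).filter (fun τ => (contB τ = false ∧ τ.head? = some r) ∧ ¬ sndLT a τ = true)
      = (permsOf n).filter (fun τ => (contB τ = false ∧ sndLT a τ = false) ∧ τ.head? = some r) :=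
    Finset.filter_congr (fun x _ => by simp only [Bool.not_eq_true]; tauto)
  rw [e1, e2] at h
  omega

lemma recA2 (n a b : ℕ) (hab : a < b) (hbn : b < n) :
    fA (n+1) a b + eA n (b-1) a = gA n (b-1) := by
  rw [← g_split_A n (b-1) a]
  congr 1
  have hd : delm a b = b - 1 := by unfold delm; split_ifs <;> omega
  rw [fA_eq]
  have hkey := key_bij n a b (show a ≠ b by omega) (by omega) contA
    (fun τ => contA τ = false ∧ sndLT a τ = false) ?_
  · rw [hd] at hkey; exact hkey
  intro t hmem hhd
  have hlen : t.length = n := by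
    have := length_of_permsOf hmem
    simpa using this
  obtain ⟨c, rest, rfl⟩ := head2_of_len hhd (by omega)
  have hca : c ≠ a := ((mem_tail_iff hmem).mp (by simp)).2
  rw [contA_cons_decomp hmem]
  have hchar := badA_char hmem
  constructor
  · rintro ⟨h1, h2⟩
    refine ⟨h1, ?_⟩
    rw [Bool.eq_false_iff]
    intro hs
    have hclt := (sndLT_map_delm rest hca).mp hs
    rw [Bool.eq_false_iff] at h2
    exact h2 (hchar.mpr ⟨hclt, hab, hbn⟩)
  · rintro ⟨h1, h2⟩
    refine ⟨h1, ?_⟩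
    rw [Bool.eq_false_iff]
    intro hb
    have hclt := (hchar.mp hb).1
    rw [Bool.eq_false_iff] at h2
    exact h2 ((sndLT_map_delm rest hca).mpr hclt)

lemma recB2 (n a b : ℕ) (hab : a + 1 < b) (hbn : b ≤ n) :
    fB (n+1) a b + eB n (b-1) a = gB n (b-1) := by
  rw [← g_split_B n (b-1) a]
  congr 1
  have hd : delm a b = b - 1 := by unfold delm; split_ifs <;> omega
  rw [fB_eq]
  have hkey := key_bij n a b (show a ≠ b by omega) (by omega) contB
    (fun τ => contB τ = false ∧ sndLT a τ = false) ?_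
  · rw [hd] at hkey; exact hkey
  intro t hmem hhd
  have hlen : t.length = n := by
    have := length_of_permsOf hmem
    simpa using this
  obtain ⟨c, rest, rfl⟩ := head2_of_len hhd (by omega)
  have hca : c ≠ a := ((mem_tail_iff hmem).mp (by simp)).2
  rw [contB_cons_decomp hmem]
  have hchar := badB_char hmem
  constructor
  · rintro ⟨h1, h2⟩
    refine ⟨h1, ?_⟩
    rw [Bool.eq_false_iff]
    intro hs
    have hclt := (sndLT_map_delm rest hca).mp hs
    rw [Bool.eq_false_iff] at h2
    exact h2 (hchar.mpr ⟨hclt, hab⟩)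
  · rintro ⟨h1, h2⟩
    refine ⟨h1, ?_⟩
    rw [Bool.eq_false_iff]
    intro hb
    have hclt := (hchar.mp hb).1
    rw [Bool.eq_false_iff] at h2
    exact h2 ((sndLT_map_delm rest hca).mpr hclt)
lemma list_len1 {l : List ℕ} (h : 1 ≤ l.length) : ∃ x rest, l = x :: rest := by
  match l with
  | [] => simp at h
  | x :: rest => exact ⟨x, rest, rfl⟩

lemma list_len2 {l : List ℕ} (h : 2 ≤ l.length) : ∃ x y rest, l = x :: y :: rest := by
  match l with
  | [] => simp at h
  | [x] => simp at h
  | x :: y :: rest => exact ⟨x, y, rest, rfl⟩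

lemma g_sum_generic (n a : ℕ) (hn : 2 ≤ n) (s : Finset (List ℕ)) (hs : s ⊆ permsOf n) :
    (s.filter (fun l => l.head? = some a)).card
      = ∑ b ∈ Finset.range n, (s.filter (fun l => l.take 2 = [a, b])).card := by
  have hfib := Finset.card_eq_sum_card_fiberwise
    (s := s.filter (fun l => l.head? = some a)) (t := Finset.range n)
    (f := fun l => l.tail.headD 0) ?_
  · rw [hfib]
    apply Finset.sum_congr rfl
    intro b _
    rw [Finset.filter_filter]
    congr 1
    apply Finset.filter_congr
    intro l hl
    have hlen : l.length = n := length_of_permsOf (hs hl)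
    obtain ⟨x, y, rest, rfl⟩ := list_len2 (l := l) (by omega)
    simp only [List.head?_cons, List.tail_cons, List.headD_cons, Option.some.injEq]
    rw [take2_iff]
    constructor
    · rintro ⟨rfl, rfl⟩; exact ⟨rest, rfl⟩
    · rintro ⟨rest', heq⟩
      obtain ⟨rfl, rfl, rfl⟩ : x = a ∧ y = b ∧ rest = rest' := by simpa using heq
      exact ⟨rfl, rfl⟩
  · intro l hl
    rw [Finset.mem_coe, Finset.mem_filter] at hl
    have hmem := hs hl.1
    have hlen : l.length = n := length_of_permsOf hmem
    obtain ⟨x, y, rest, rfl⟩ := list_len2 (l := l) (by omega)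
    simp only [List.tail_cons, List.headD_cons, Finset.mem_coe, Finset.mem_range]
    exact lt_of_mem_permsOf hmem (by simp)

lemma e_sum_generic (n r a : ℕ) (hn : 2 ≤ n) (s : Finset (List ℕ)) (hs : s ⊆ permsOf n) :
    (s.filter (fun l => l.head? = some r ∧ sndLT a l = true)).card
      = ∑ c ∈ Finset.range a, (s.filter (fun l => l.take 2 = [r, c])).card := by
  have hfib := Finset.card_eq_sum_card_fiberwise
    (s := s.filter (fun l => l.head? = some r ∧ sndLT a l = true)) (t := Finset.range a)
    (f := fun l => l.tail.headD 0) ?_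
  · rw [hfib]
    apply Finset.sum_congr rfl
    intro c hc
    rw [Finset.filter_filter]
    congr 1
    apply Finset.filter_congr
    intro l hl
    have hlen : l.length = n := length_of_permsOf (hs hl)
    have hca : c < a := by simpa using hc
    obtain ⟨x, y, rest, rfl⟩ := list_len2 (l := l) (by omega)
    simp only [List.head?_cons, Option.some.injEq, List.tail_cons, List.headD_cons]
    show (x = r ∧ sndLT a (x :: y :: rest) = true) ∧ y = c ↔ _
    have hsnd : sndLT a (x :: y :: rest) = decide (y < a) := rfl
    rw [take2_iff, hsnd]
    constructor
    · rintro ⟨⟨rfl, -⟩, rfl⟩; exact ⟨rest, rfl⟩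
    · rintro ⟨rest', heq⟩
      obtain ⟨rfl, rfl, rfl⟩ : x = r ∧ y = c ∧ rest = rest' := by simpa using heq
      exact ⟨⟨rfl, by simpa using hca⟩, rfl⟩
  · intro l hl
    rw [Finset.mem_coe, Finset.mem_filter] at hl
    have hmem := hs hl.1
    have hlen : l.length = n := length_of_permsOf hmem
    obtain ⟨-, -, hsnd⟩ := hl
    obtain ⟨x, y, rest, rfl⟩ := list_len2 (l := l) (by omega)
    simp only [List.tail_cons, List.headD_cons, Finset.mem_coe, Finset.mem_range]
    simpa [sndLT] using hsnd

lemma N_sum_generic (n : ℕ) (hn : 1 ≤ n) (s : Finset (List ℕ)) (hs : s ⊆ permsOf n) :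
    s.card = ∑ a ∈ Finset.range n, (s.filter (fun l => l.head? = some a)).card := by
  have hfib := Finset.card_eq_sum_card_fiberwise
    (s := s) (t := Finset.range n) (f := fun l => l.headD 0) ?_
  · rw [hfib]
    apply Finset.sum_congr rfl
    intro a _
    congr 1
    apply Finset.filter_congr
    intro l hl
    have hlen : l.length = n := length_of_permsOf (hs hl)
    obtain ⟨x, rest, rfl⟩ := list_len1 (l := l) (by omega)
    simp
  · intro l hl
    have hmem := hs hl
    have hlen : l.length = n := length_of_permsOf hmem
    obtain ⟨x, rest, rfl⟩ := list_len1 (l := l) (by omega)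
    simp only [List.headD_cons, Finset.mem_coe, Finset.mem_range]
    exact lt_of_mem_permsOf hmem (by simp)

lemma f_zero_generic (n a b : ℕ) (h : ¬(a < n ∧ b < n ∧ a ≠ b)) (s : Finset (List ℕ))
    (hs : s ⊆ permsOf n) : (s.filter (fun l => l.take 2 = [a, b])).card = 0 := by
  rw [Finset.card_eq_zero, Finset.eq_empty_iff_forall_notMem]
  intro l hl
  rw [Finset.mem_filter] at hl
  obtain ⟨hmem, htk⟩ := hl
  obtain ⟨rest, rfl⟩ := take2_iff.mp htk
  have hmem' := hs hmem
  have ha : a < n := lt_of_mem_permsOf hmem' (by simp)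
  have hb : b < n := lt_of_mem_permsOf hmem' (by simp)
  have hnd := nodup_of_permsOf hmem'
  have hab : a ≠ b := by
    simp only [List.nodup_cons, List.mem_cons] at hnd
    tauto
  exact h ⟨ha, hb, hab⟩

lemma fA_zero (n a b : ℕ) (h : ¬(a < n ∧ b < n ∧ a ≠ b)) : fA n a b = 0 :=
  f_zero_generic n a b h _ (Finset.filter_subset _ _)
lemma fB_zero (n a b : ℕ) (h : ¬(a < n ∧ b < n ∧ a ≠ b)) : fB n a b = 0 :=
  f_zero_generic n a b h _ (Finset.filter_subset _ _)

lemma gA_sum (n a : ℕ) (hn : 2 ≤ n) : gA n a = ∑ b ∈ Finset.range n, fA n a b :=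
  g_sum_generic n a hn _ (Finset.filter_subset _ _)
lemma gB_sum (n a : ℕ) (hn : 2 ≤ n) : gB n a = ∑ b ∈ Finset.range n, fB n a b :=
  g_sum_generic n a hn _ (Finset.filter_subset _ _)
lemma eA_sum (n r a : ℕ) (hn : 2 ≤ n) : eA n r a = ∑ c ∈ Finset.range a, fA n r c :=
  e_sum_generic n r a hn _ (Finset.filter_subset _ _)
lemma eB_sum (n r a : ℕ) (hn : 2 ≤ n) : eB n r a = ∑ c ∈ Finset.range a, fB n r c :=
  e_sum_generic n r a hn _ (Finset.filter_subset _ _)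
lemma NA_sum (n : ℕ) (hn : 1 ≤ n) : NA n = ∑ a ∈ Finset.range n, gA n a :=
  N_sum_generic n hn _ (Finset.filter_subset _ _)
lemma NB_sum (n : ℕ) (hn : 1 ≤ n) : NB n = ∑ a ∈ Finset.range n, gB n a :=
  N_sum_generic n hn _ (Finset.filter_subset _ _)

lemma contA_length {l : List ℕ} (h : contA l = true) : 4 ≤ l.length := by
  induction l with
  | nil => simp [contA] at h
  | cons v t ih =>
    rw [show contA (v :: t) = (contA t || badA v t) from rfl, Bool.or_eq_true] at h
    rcases h with h | h
    · have := ih h; simp; omega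
    · obtain ⟨b, c, rest, rfl, -, -, x, hx, -⟩ := (badA_iff v t).mp h
      have : 1 ≤ rest.length := List.length_pos_iff.mpr (List.ne_nil_of_mem hx)
      simp; omega

lemma contB_length {l : List ℕ} (h : contB l = true) : 4 ≤ l.length := by
  induction l with
  | nil => simp [contB] at h
  | cons v t ih =>
    rw [show contB (v :: t) = (contB t || badB v t) from rfl, Bool.or_eq_true] at h
    rcases h with h | h
    · have := ih h; simp; omega
    · obtain ⟨b, c, rest, rfl, -, -, x, hx, -⟩ := (badB_iff v t).mp h
      have : 1 ≤ rest.length := List.length_pos_iff.mpr (List.ne_nil_of_mem hx)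
      simp; omega

lemma avA_short (n : ℕ) (hn : n ≤ 3) : avA n = permsOf n := by
  unfold avA
  apply Finset.filter_true_of_mem
  intro l hl
  rw [Bool.eq_false_iff]
  intro hc
  have := contA_length hc
  have := length_of_permsOf hl
  omega

lemma avB_short (n : ℕ) (hn : n ≤ 3) : avB n = permsOf n := by
  unfold avB
  apply Finset.filter_true_of_mem
  intro l hl
  rw [Bool.eq_false_iff]
  intro hc
  have := contB_length hc
  have := length_of_permsOf hl
  omega
def SS (n a : ℕ) : ℕ := ∑ c ∈ Finset.range a, fA (n-1) (n-2) c

structure Pack (n : ℕ) : Prop where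
  q1 : ∀ a b, b < a → fA n a b = fB n a b
  q2 : ∀ a a' b, b < a → b < a' → a < n → a' < n → fA n a b = fA n a' b
  q3 : ∀ a b, a + 1 < b → b + 1 < n → fA n a b = fB n a b
  q4 : ∀ a, a + 2 < n → fB n a (a+1) = fA n a (a+1) + SS n a
  q5 : ∀ a, a + 2 < n → fA n a (n-1) = fB n a (n-1) + SS n a
  q6 : ∀ a, a + 2 = n → fA n a (n-1) = fB n a (n-1)

lemma gEq (n : ℕ) (hn : 2 ≤ n) (hp : Pack n) : ∀ a, a < n → gA n a = gB n a := by
  intro a ha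
  rw [gA_sum n a hn, gB_sum n a hn]
  have hdiag : fA n a a = fB n a a := by
    rw [fA_zero n a a (by omega), fB_zero n a a (by omega)]
  rcases Nat.lt_trichotomy (a+2) n with hcase | hcase | hcase
  · -- a + 2 < n : peel b = a+1 and b = n-1
    have hmem1 : a + 1 ∈ Finset.range n := by simp; omega
    have hmem2 : n - 1 ∈ (Finset.range n).erase (a+1) := by
      rw [Finset.mem_erase]; constructor
      · omega
      · simp; omega
    have h1A := Finset.sum_erase_add (Finset.range n) (fA n a) hmem1
    have h2A := Finset.sum_erase_add ((Finset.range n).erase (a+1)) (fA n a) hmem2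
    have h1B := Finset.sum_erase_add (Finset.range n) (fB n a) hmem1
    have h2B := Finset.sum_erase_add ((Finset.range n).erase (a+1)) (fB n a) hmem2
    have hT : ∑ b ∈ ((Finset.range n).erase (a+1)).erase (n-1), fA n a b
        = ∑ b ∈ ((Finset.range n).erase (a+1)).erase (n-1), fB n a b := by
      apply Finset.sum_congr rfl
      intro b hb
      rw [Finset.mem_erase, Finset.mem_erase, Finset.mem_range] at hb
      obtain ⟨hb1, hb2, hb3⟩ := hb
      rcases Nat.lt_trichotomy b a with h' | h' | h'
      · exact hp.q1 a b h'
      · subst h'; exact hdiag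
      · exact hp.q3 a b (by omega) (by omega)
    have h4 := hp.q4 a hcase
    have h5 := hp.q5 a hcase
    omega
  · -- a + 2 = n : peel b = a+1 = n-1
    have hmem1 : a + 1 ∈ Finset.range n := by simp; omega
    have h1A := Finset.sum_erase_add (Finset.range n) (fA n a) hmem1
    have h1B := Finset.sum_erase_add (Finset.range n) (fB n a) hmem1
    have hT : ∑ b ∈ (Finset.range n).erase (a+1), fA n a b
        = ∑ b ∈ (Finset.range n).erase (a+1), fB n a b := by
      apply Finset.sum_congr rfl
      intro b hb
      rw [Finset.mem_erase, Finset.mem_range] at hb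
      obtain ⟨hb1, hb2⟩ := hb
      rcases Nat.lt_trichotomy b a with h' | h' | h'
      · exact hp.q1 a b h'
      · subst h'; exact hdiag
      · omega
    have h6 := hp.q6 a hcase
    have hne : n - 1 = a + 1 := by omega
    rw [hne] at h6
    omega
  · -- a + 2 > n, i.e. a = n - 1
    apply Finset.sum_congr rfl
    intro b hb
    rw [Finset.mem_range] at hb
    rcases Nat.lt_trichotomy b a with h' | h' | h'
    · exact hp.q1 a b h'
    · subst h'; exact hdiag
    · omega

lemma NEq (n : ℕ) (hn : 2 ≤ n) (hp : Pack n) : NA n = NB n := by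
  rw [NA_sum n (by omega), NB_sum n (by omega)]
  exact Finset.sum_congr rfl (fun a ha => gEq n hn hp a (by simpa using ha))

lemma pack_two : Pack 2 := by
  have hAB : ∀ a b, fA 2 a b = fB 2 a b := by
    intro a b
    unfold fA fB
    rw [avA_short 2 (by omega), avB_short 2 (by omega)]
  have hSS : ∀ a, SS 2 a = 0 := by
    intro a
    apply Finset.sum_eq_zero
    intro c _
    exact fA_zero 1 0 c (by omega)
  constructor
  · intro a b _; exact hAB a b
  · intro a a' b h1 h2 h3 h4
    have : a = a' := by omega
    subst this; rfl
  · intro a b _ _; exact hAB a b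
  · intro a h; omega
  · intro a h; omega
  · intro a h; rw [hAB]
lemma pack_step (n : ℕ) (hn : 2 ≤ n) (hp : Pack n) : Pack (n+1) := by
  have hgE := gEq n hn hp
  have eRowA : ∀ a r, a ≤ r → r < n → eA n r a = SS (n+1) a := by
    intro a r har hrn
    rw [eA_sum n r a hn]
    apply Finset.sum_congr rfl
    intro c hc
    rw [Finset.mem_range] at hc
    exact hp.q2 r (n-1) c (by omega) (by omega) (by omega) (by omega)
  have eEq : ∀ a r, a ≤ r → eA n r a = eB n r a := by
    intro a r har
    rw [eA_sum n r a hn, eB_sum n r a hn]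
    exact Finset.sum_congr rfl (fun c hc => hp.q1 r c (by simp at hc; omega))
  constructor
  · intro a b hba
    by_cases han : a ≤ n
    · rw [recA1 n a b hba han, recB1 n a b hba han]
      exact hgE b (by omega)
    · rw [fA_zero _ _ _ (by omega), fB_zero _ _ _ (by omega)]
  · intro a a' b hba hba' ha ha'
    rw [recA1 n a b hba (by omega), recA1 n a' b hba' (by omega)]
  · intro a b h1 h2
    have rA := recA2 n a b (by omega) (by omega)
    have rB := recB2 n a b h1 (by omega)
    have he1 := eEq a (b-1) (by omega)
    have hg := hgE (b-1) (by omega)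
    omega
  · intro a h
    have rA := recA2 n a (a+1) (by omega) (by omega)
    simp only [Nat.add_sub_cancel] at rA
    have rB := recB3 n a (by omega)
    have hg := hgE a (by omega)
    have he := eRowA a a (le_refl a) (by omega)
    omega
  · intro a h
    simp only [Nat.add_sub_cancel]
    have rA := recA3 n a (by omega)
    have rB := recB2 n a n (by omega) (le_refl n)
    have heB := (eEq a (n-1) (by omega)).symm
    have heA := eRowA a (n-1) (by omega) (by omega)
    have hg := hgE (n-1) (by omega)
    omega
  · intro a h
    simp only [Nat.add_sub_cancel]
    have rA := recA3 n a (by omega)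
    have rB := recB3 n a (by omega)
    have han : a + 1 = n := by omega
    rw [han] at rB
    have hg := hgE (n-1) (by omega)
    have han' : a = n - 1 := by omega
    rw [rA, rB, hg, han']

lemma pack_all : ∀ n, 2 ≤ n → Pack n := by
  intro n hn
  induction n, hn using Nat.le_induction with
  | base => exact pack_two
  | succ n hn ih => exact pack_step n hn ih

lemma NA_eq_NB (n : ℕ) : NA n = NB n := by
  rcases le_or_gt n 1 with h | h
  · unfold NA NB
    rw [avA_short n (by omega), avB_short n (by omega)]
  · exact NEq n (by omega) (pack_all n (by omega))
lemma toL_mem_permsOf {n : ℕ} (π : Equiv.Perm (Fin n)) : toL ⇑π ∈ permsOf n := by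
  rw [mem_permsOf]
  apply List.perm_of_nodup_nodup_toFinset_eq
  · rw [toL, List.nodup_ofFn]
    intro i j hij
    exact π.injective (Fin.val_injective hij)
  · exact List.nodup_range
  · ext x
    simp only [List.mem_toFinset, toL, List.mem_ofFn, Set.mem_range, List.mem_range]
    constructor
    · rintro ⟨i, rfl⟩; exact (π i).isLt
    · intro hx
      obtain ⟨i, hi⟩ := π.surjective ⟨x, hx⟩
      exact ⟨i, by rw [hi]⟩

noncomputable def permOfList {n : ℕ} (l : List ℕ) (hl : l ∈ permsOf n) : Equiv.Perm (Fin n) := by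
  apply Equiv.ofBijective (f := fun i : Fin n =>
    (⟨l[(i : ℕ)]'(by rw [length_of_permsOf hl]; exact i.isLt),
      lt_of_mem_permsOf hl (List.getElem_mem _)⟩ : Fin n))
  rw [← Finite.injective_iff_bijective]
  intro i j hij
  have := ((nodup_of_permsOf hl).getElem_inj_iff).mp (congrArg Fin.val hij)
  exact Fin.val_injective this

lemma toL_permOfList {n : ℕ} (l : List ℕ) (hl : l ∈ permsOf n) : toL ⇑(permOfList l hl) = l := by
  apply List.ext_getElem
  · rw [toL_length, length_of_permsOf hl]
  · intro i h1 h2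
    rw [toL_get]
    rfl

lemma card_avoid_A (n : ℕ) :
    Nat.card {π : Equiv.Perm (Fin n) // ¬ Contains231d4 ⇑π} = NA n := by
  rw [show NA n = (avA n).card from rfl, ← Nat.card_eq_finsetCard]
  apply Nat.card_eq_of_bijective (f := fun (p : {π : Equiv.Perm (Fin n) // ¬ Contains231d4 ⇑π}) =>
    (⟨toL ⇑p.1, by
      rw [show avA n = (permsOf n).filter (fun l => contA l = false) from rfl, Finset.mem_filter]
      refine ⟨toL_mem_permsOf p.1, ?_⟩
      rw [Bool.eq_false_iff]
      intro hc
      exact p.2 ((contains231_iff_contA ⇑p.1).mpr hc)⟩ : {l // l ∈ avA n}))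
  constructor
  · rintro ⟨π, hπ⟩ ⟨σ, hσ⟩ heq
    simp only [Subtype.mk.injEq] at heq
    ext i
    have h1 : (toL ⇑π)[(i : ℕ)]'(by rw [toL_length]; exact i.isLt)
        = (toL ⇑σ)[(i : ℕ)]'(by rw [toL_length]; exact i.isLt) := by simp only [heq]
    rw [toL_get, toL_get] at h1
    simpa using h1
  · rintro ⟨l, hl⟩
    have hlp : l ∈ permsOf n := Finset.mem_filter.mp hl |>.1
    have hcont : contA l = false := Finset.mem_filter.mp hl |>.2
    refine ⟨⟨permOfList l hlp, ?_⟩, ?_⟩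
    · intro hc
      rw [contains231_iff_contA, toL_permOfList] at hc
      rw [hc] at hcont
      exact absurd hcont (by simp)
    · simp only [Subtype.mk.injEq]
      exact toL_permOfList l hlp

lemma card_avoid_B (n : ℕ) :
    Nat.card {π : Equiv.Perm (Fin n) // ¬ Contains241d3 ⇑π} = NB n := by
  rw [show NB n = (avB n).card from rfl, ← Nat.card_eq_finsetCard]
  apply Nat.card_eq_of_bijective (f := fun (p : {π : Equiv.Perm (Fin n) // ¬ Contains241d3 ⇑π}) =>
    (⟨toL ⇑p.1, by
      rw [show avB n = (permsOf n).filter (fun l => contB l = false) from rfl, Finset.mem_filter]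
      refine ⟨toL_mem_permsOf p.1, ?_⟩
      rw [Bool.eq_false_iff]
      intro hc
      exact p.2 ((contains241_iff_contB ⇑p.1).mpr hc)⟩ : {l // l ∈ avB n}))
  constructor
  · rintro ⟨π, hπ⟩ ⟨σ, hσ⟩ heq
    simp only [Subtype.mk.injEq] at heq
    ext i
    have h1 : (toL ⇑π)[(i : ℕ)]'(by rw [toL_length]; exact i.isLt)
        = (toL ⇑σ)[(i : ℕ)]'(by rw [toL_length]; exact i.isLt) := by simp only [heq]
    rw [toL_get, toL_get] at h1
    simpa using h1
  · rintro ⟨l, hl⟩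
    have hlp : l ∈ permsOf n := Finset.mem_filter.mp hl |>.1
    have hcont : contB l = false := Finset.mem_filter.mp hl |>.2
    refine ⟨⟨permOfList l hlp, ?_⟩, ?_⟩
    · intro hc
      rw [contains241_iff_contB, toL_permOfList] at hc
      rw [hc] at hcont
      exact absurd hcont (by simp)
    · simp only [Subtype.mk.injEq]
      exact toL_permOfList l hlp

theorem wilf_231d4_241d3 (n : ℕ) :
    Nat.card {π : Equiv.Perm (Fin n) // ¬ Contains231d4 ⇑π} =
      Nat.card {π : Equiv.Perm (Fin n) // ¬ Contains241d3 ⇑π} := by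
  rw [card_avoid_A, card_avoid_B, NA_eq_NB]
end

section
/- For all n ≥ 0, the number of permutations of length n avoiding the vincular pattern 14-2-3 equals the number of permutations of length n avoiding the vincular pattern 41-2-3. -/
set_option maxHeartbeats 1000000

/-- `π` contains 14-2-3: indices `i+1 < j < k` with `π i < π j < π k < π (i+1)`. -/
def Contains14d2d3 {n : ℕ} (π : Fin n → Fin n) : Prop :=
  ∃ (i j k : ℕ) (hi : i + 1 < n) (hk : k < n) (hij : i + 1 < j) (hjk : j < k),
    π ⟨i, by omega⟩ < π ⟨j, by omega⟩ ∧
    π ⟨j, by omega⟩ < π ⟨k, hk⟩ ∧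
    π ⟨k, hk⟩ < π ⟨i + 1, hi⟩

/-- `π` contains 41-2-3: indices `i+1 < j < k` with `π (i+1) < π j < π k < π i`. -/
def Contains41d2d3 {n : ℕ} (π : Fin n → Fin n) : Prop :=
  ∃ (i j k : ℕ) (hi : i + 1 < n) (hk : k < n) (hij : i + 1 < j) (hjk : j < k),
    π ⟨i + 1, hi⟩ < π ⟨j, by omega⟩ ∧
    π ⟨j, by omega⟩ < π ⟨k, hk⟩ ∧
    π ⟨k, hk⟩ < π ⟨i, by omega⟩


namespace Wilf1423

variable {n : ℕ}

/-- There is an increasing pair at positions `> t` with values strictly in `(u,v)`. -/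
def IncPairIn (π : Fin n → Fin n) (t : ℕ) (u v : Fin n) : Prop :=
  ∃ (j k : ℕ) (hj : j < n) (hk : k < n), t < j ∧ j < k ∧
    u < π ⟨j, hj⟩ ∧ π ⟨j, hj⟩ < π ⟨k, hk⟩ ∧ π ⟨k, hk⟩ < v

/-- `q` is `p` with the entries at positions `m`, `m+1` swapped. -/
def SwapAt (p q : Fin n → Fin n) (m : ℕ) (hm : m + 1 < n) : Prop :=
  q ⟨m, by omega⟩ = p ⟨m + 1, hm⟩ ∧ q ⟨m + 1, hm⟩ = p ⟨m, by omega⟩ ∧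
    ∀ x : Fin n, (x : ℕ) ≠ m → (x : ℕ) ≠ m + 1 → q x = p x

/-- Position `m` is dangerous. -/
def Danger (p : Fin n → Fin n) (m : ℕ) (hm : m + 1 < n) : Prop :=
  IncPairIn p (m + 1) (min (p ⟨m, by omega⟩) (p ⟨m + 1, hm⟩))
    (max (p ⟨m, by omega⟩) (p ⟨m + 1, hm⟩))

lemma incPair_mono_t {π : Fin n → Fin n} {t t' : ℕ} {u v : Fin n} (h : t' ≤ t)
    (H : IncPairIn π t u v) : IncPairIn π t' u v := by
  obtain ⟨j, k, hj, hk, h1, h2, h3⟩ := H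
  exact ⟨j, k, hj, hk, by omega, h2, h3⟩

lemma incPair_mono_uv {π : Fin n → Fin n} {t : ℕ} {u v u' v' : Fin n} (hu : u ≤ u')
    (hv : v' ≤ v) (H : IncPairIn π t u' v') : IncPairIn π t u v := by
  obtain ⟨j, k, hj, hk, h1, h2, h3, h4, h5⟩ := H
  exact ⟨j, k, hj, hk, h1, h2, lt_of_le_of_lt hu h3, h4, lt_of_lt_of_le h5 hv⟩

lemma incPair_congr {p q : Fin n → Fin n} {t : ℕ} {u v : Fin n}
    (h : ∀ x : Fin n, t < (x : ℕ) → q x = p x)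
    (H : IncPairIn p t u v) : IncPairIn q t u v := by
  obtain ⟨j, k, hj, hk, h1, h2, h3, h4, h5⟩ := H
  refine ⟨j, k, hj, hk, h1, h2, ?_, ?_, ?_⟩
  · rwa [h ⟨j, hj⟩ (show t < j from h1)]
  · rw [h ⟨j, hj⟩ (show t < j from h1), h ⟨k, hk⟩ (show t < k by omega)]; exact h4
  · rwa [h ⟨k, hk⟩ (show t < k by omega)]

lemma swapAt_symm {p q : Fin n → Fin n} {m : ℕ} {hm : m + 1 < n}
    (h : SwapAt p q m hm) : SwapAt q p m hm :=
  ⟨h.2.1.symm, h.1.symm, fun x hx1 hx2 => (h.2.2 x hx1 hx2).symm⟩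

lemma swapAt_gt {p q : Fin n → Fin n} {m : ℕ} {hm : m + 1 < n}
    (h : SwapAt p q m hm) : ∀ x : Fin n, m + 1 < (x : ℕ) → q x = p x :=
  fun x hx => h.2.2 x (by omega) (by omega)

lemma danger_swap {p q : Fin n → Fin n} {m : ℕ} {hm : m + 1 < n}
    (h : SwapAt p q m hm) (hd : Danger p m hm) : Danger q m hm := by
  unfold Danger at *
  rw [h.1, h.2.1, min_comm, max_comm]
  exact incPair_congr (swapAt_gt h) hd

/-- Key invariance lemma: swapping a dangerous pair at position `m` preserves the
existence of increasing pairs in any window `(t, ·)` with `t < m`. -/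
lemma keyL {p q : Fin n → Fin n} {m : ℕ} {hm : m + 1 < n}
    (hs : SwapAt p q m hm) (hd : Danger p m hm) {t : ℕ} (ht : t < m) {u v : Fin n}
    (H : IncPairIn p t u v) : IncPairIn q t u v := by
  obtain ⟨j, k, hj, hk, h1, h2, h3, h4, h5⟩ := H
  have hsm : q ⟨m, by omega⟩ = p ⟨m + 1, hm⟩ := hs.1
  have hsm1 : q ⟨m + 1, hm⟩ = p ⟨m, by omega⟩ := hs.2.1
  have hso : ∀ (x : ℕ) (hx : x < n), x ≠ m → x ≠ m + 1 → q ⟨x, hx⟩ = p ⟨x, hx⟩ :=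
    fun x hx e1 e2 => hs.2.2 ⟨x, hx⟩ e1 e2
  by_cases hjm : j = m
  · subst hjm
    by_cases hkm : k = j + 1
    · subst hkm
      -- the swapped pair itself was the witness; use dangerousness
      have h3' : u < p ⟨j, by omega⟩ := h3
      have h4' : p ⟨j, by omega⟩ < p ⟨j + 1, hm⟩ := h4
      have h5' : p ⟨j + 1, hm⟩ < v := h5
      have hmin : min (p ⟨j, by omega⟩) (p ⟨j+1, hm⟩) = p ⟨j, by omega⟩ := min_eq_left h4'.le
      have hmax : max (p ⟨j, by omega⟩) (p ⟨j+1, hm⟩) = p ⟨j+1, hm⟩ := max_eq_right h4'.le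
      rw [Danger, hmin, hmax] at hd
      have H2 : IncPairIn q (j + 1) (p ⟨j, by omega⟩) (p ⟨j+1, hm⟩) :=
        incPair_congr (swapAt_gt hs) hd
      exact incPair_mono_t (by omega) (incPair_mono_uv h3'.le h5'.le H2)
    · -- j = m, k > m+1 : use positions (m+1, k)
      refine ⟨j + 1, k, hm, hk, by omega, by omega, ?_, ?_, ?_⟩
      · rw [hsm1]; exact h3
      · rw [hsm1, hso k hk (by omega) (by omega)]; exact h4
      · rwa [hso k hk (by omega) (by omega)]
  · by_cases hjm1 : j = m + 1
    · subst hjm1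
      -- j = m+1 (so k > m+1) : use positions (m, k)
      refine ⟨m, k, by omega, hk, by omega, by omega, ?_, ?_, ?_⟩
      · rw [hsm]; exact h3
      · rw [hsm, hso k hk (by omega) (by omega)]; exact h4
      · rwa [hso k hk (by omega) (by omega)]
    · by_cases hkm : k = m
      · subst hkm
        -- k = m, j < m : use (j, m+1)
        refine ⟨j, k + 1, hj, hm, h1, by omega, ?_, ?_, ?_⟩
        · rwa [hso j hj hjm hjm1]
        · rw [hso j hj hjm hjm1, hsm1]; exact h4
        · rw [hsm1]; exact h5
      · by_cases hkm1 : k = m + 1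
        · subst hkm1
          -- k = m+1, j < m : use (j, m)
          refine ⟨j, m, hj, by omega, h1, by omega, ?_, ?_, ?_⟩
          · rwa [hso j hj hjm hjm1]
          · rw [hso j hj hjm hjm1, hsm]; exact h4
          · rw [hsm]; exact h5
        · refine ⟨j, k, hj, hk, h1, h2, ?_, ?_, ?_⟩
          · rwa [hso j hj hjm hjm1]
          · rw [hso j hj hjm hjm1, hso k hk hkm hkm1]; exact h4
          · rwa [hso k hk hkm hkm1]


open Relation Equiv Finset

/-- Swap the entries of `p` at positions `m`, `m+1`. -/
def flipPerm (p : Equiv.Perm (Fin n)) (m : ℕ) (hm : m + 1 < n) : Equiv.Perm (Fin n) :=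
  p * Equiv.swap ⟨m, by omega⟩ ⟨m + 1, hm⟩

lemma flipPerm_swapAt (p : Equiv.Perm (Fin n)) (m : ℕ) (hm : m + 1 < n) :
    SwapAt ⇑p ⇑(flipPerm p m hm) m hm := by
  have hne : (⟨m, by omega⟩ : Fin n) ≠ ⟨m + 1, hm⟩ := by
    intro h; exact absurd (congrArg Fin.val h) (by simp)
  refine ⟨?_, ?_, ?_⟩
  · simp [flipPerm, Equiv.Perm.mul_apply, Equiv.swap_apply_left]
  · simp [flipPerm, Equiv.Perm.mul_apply, Equiv.swap_apply_right]
  · intro x hx1 hx2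
    have e1 : x ≠ ⟨m, by omega⟩ := fun h => hx1 (by rw [h])
    have e2 : x ≠ ⟨m + 1, hm⟩ := fun h => hx2 (by rw [h])
    simp [flipPerm, Equiv.Perm.mul_apply, Equiv.swap_apply_of_ne_of_ne e1 e2]

lemma swapAt_unique {p q1 q2 : Equiv.Perm (Fin n)} {m : ℕ} {hm : m + 1 < n}
    (h1 : SwapAt ⇑p ⇑q1 m hm) (h2 : SwapAt ⇑p ⇑q2 m hm) : q1 = q2 := by
  apply Equiv.ext
  intro x
  by_cases e1 : (x : ℕ) = m
  · have : x = ⟨m, by omega⟩ := Fin.ext (by simpa using e1)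
    rw [this, h1.1, h2.1]
  · by_cases e2 : (x : ℕ) = m + 1
    · have : x = ⟨m + 1, hm⟩ := Fin.ext (by simpa using e2)
      rw [this, h1.2.1, h2.2.1]
    · rw [h1.2.2 x e1 e2, h2.2.2 x e1 e2]

/-- Flip relation with an orientation condition on the flipped pair. -/
def FlipR (cond : Fin n → Fin n → Prop) (p q : Equiv.Perm (Fin n)) : Prop :=
  ∃ (m : ℕ) (hm : m + 1 < n), cond (p ⟨m, by omega⟩) (p ⟨m + 1, hm⟩) ∧
    Danger ⇑p m hm ∧ SwapAt ⇑p ⇑q m hm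

/-- Flip a dangerous descent. -/
def DescR : Equiv.Perm (Fin n) → Equiv.Perm (Fin n) → Prop := FlipR (fun a b => b < a)

/-- Flip a dangerous ascent. -/
def AscR : Equiv.Perm (Fin n) → Equiv.Perm (Fin n) → Prop := FlipR (fun a b => a < b)

lemma descR_iff_ascR {p q : Equiv.Perm (Fin n)} : DescR p q ↔ AscR q p := by
  constructor
  · rintro ⟨m, hm, hcond, hd, hsw⟩
    refine ⟨m, hm, ?_, danger_swap hsw hd, swapAt_symm hsw⟩
    rw [hsw.1, hsw.2.1]; exact hcond
  · rintro ⟨m, hm, hcond, hd, hsw⟩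
    refine ⟨m, hm, ?_, danger_swap hsw hd, swapAt_symm hsw⟩
    rw [hsw.1, hsw.2.1]; exact hcond

/-- Weighted sum measure. -/
def wsum (p : Equiv.Perm (Fin n)) : ℕ := ∑ x : Fin n, (x : ℕ) * (p x : ℕ)

lemma wsum_le (p : Equiv.Perm (Fin n)) : wsum p ≤ n * n * n := by
  calc wsum p ≤ ∑ _x : Fin n, n * n := by
        refine Finset.sum_le_sum fun x _ => ?_
        exact Nat.mul_le_mul x.isLt.le (p x).isLt.le
    _ = n * n * n := by simp [mul_comm]

lemma wsum_lt {p q : Equiv.Perm (Fin n)} {m : ℕ} {hm : m + 1 < n}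
    (hsw : SwapAt ⇑p ⇑q m hm) (hlt : p ⟨m + 1, hm⟩ < p ⟨m, by omega⟩) :
    wsum p < wsum q := by
  set A : Fin n := ⟨m, by omega⟩ with hA
  set B : Fin n := ⟨m + 1, hm⟩ with hB
  have hAB : A ≠ B := by
    intro h; exact absurd (congrArg Fin.val h) (by simp [hA, hB])
  have hBmem : B ∈ (univ : Finset (Fin n)).erase A := by
    simp [Finset.mem_erase, hAB.symm]
  have split : ∀ f : Fin n → ℕ,
      ∑ x : Fin n, f x = (∑ x ∈ ((univ : Finset (Fin n)).erase A).erase B, f x) + f B + f A := by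
    intro f
    rw [← Finset.sum_erase_add _ _ (Finset.mem_univ A), ← Finset.sum_erase_add _ _ hBmem]
  have eqrest : ∑ x ∈ ((univ : Finset (Fin n)).erase A).erase B, (x : ℕ) * (q x : ℕ)
      = ∑ x ∈ ((univ : Finset (Fin n)).erase A).erase B, (x : ℕ) * (p x : ℕ) := by
    refine Finset.sum_congr rfl fun x hx => ?_
    have hx1 : x ≠ B := (Finset.mem_erase.1 hx).1
    have hx2 : x ≠ A := (Finset.mem_erase.1 (Finset.mem_erase.1 hx).2).1
    have e1 : (x : ℕ) ≠ m := fun h => hx2 (Fin.ext (by simpa using h))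
    have e2 : (x : ℕ) ≠ m + 1 := fun h => hx1 (Fin.ext (by simpa using h))
    rw [hsw.2.2 x e1 e2]
  rw [wsum, wsum, split (fun x => (x : ℕ) * (p x : ℕ)), split (fun x => (x : ℕ) * (q x : ℕ)),
    eqrest]
  have hqA : (q A : ℕ) = (p B : ℕ) := by rw [hsw.1]
  have hqB : (q B : ℕ) = (p A : ℕ) := by rw [hsw.2.1]
  rw [hqA, hqB]
  have hvA : (A : ℕ) = m := rfl
  have hvB : (B : ℕ) = m + 1 := rfl
  rw [hvA, hvB]
  have hlt' : (p B : ℕ) < (p A : ℕ) := hlt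
  have e3 : (m + 1) * (p A : ℕ) = m * (p A : ℕ) + (p A : ℕ) := by ring
  have e4 : (m + 1) * (p B : ℕ) = m * (p B : ℕ) + (p B : ℕ) := by ring
  rw [e3, e4]
  generalize m * (p A : ℕ) = u at *
  generalize m * (p B : ℕ) = w at *
  omega

lemma descR_wsum {p q : Equiv.Perm (Fin n)} (h : DescR p q) : wsum p < wsum q := by
  obtain ⟨m, hm, hcond, _, hsw⟩ := h
  exact wsum_lt hsw hcond

lemma ascR_wsum {p q : Equiv.Perm (Fin n)} (h : AscR p q) : wsum q < wsum p := by
  obtain ⟨m, hm, hcond, _, hsw⟩ := h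
  exact wsum_lt (swapAt_symm hsw) (by rw [hsw.1, hsw.2.1]; exact hcond)

section Generic

variable {α : Type*} (r : α → α → Prop) (g : α → ℕ)

lemma rtg_nf (hg : ∀ a b, r a b → g b < g a) :
    ∀ (N : ℕ) (a : α), g a ≤ N → ∃ b, ReflTransGen r a b ∧ ∀ c, ¬ r b c := by
  intro N
  induction N with
  | zero =>
    intro a ha
    by_cases h : ∃ c, r a c
    · obtain ⟨c, hc⟩ := h; exact absurd (hg a c hc) (by omega)
    · exact ⟨a, ReflTransGen.refl, fun c hc => h ⟨c, hc⟩⟩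
  | succ N ih =>
    intro a ha
    by_cases h : ∃ c, r a c
    · obtain ⟨c, hc⟩ := h
      obtain ⟨b, hb1, hb2⟩ := ih c (by have := hg a c hc; omega)
      exact ⟨b, ReflTransGen.head hc hb1, hb2⟩
    · exact ⟨a, ReflTransGen.refl, fun c hc => h ⟨c, hc⟩⟩

lemma newman (hg : ∀ a b, r a b → g b < g a)
    (lc : ∀ a b c, r a b → r a c → ∃ d, ReflTransGen r b d ∧ ReflTransGen r c d) :
    ∀ (N : ℕ) (a b c : α), g a ≤ N → ReflTransGen r a b → ReflTransGen r a c →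
      ∃ d, ReflTransGen r b d ∧ ReflTransGen r c d := by
  intro N
  induction N with
  | zero =>
    intro a b c ha hab hac
    rcases hab.cases_head with rfl | ⟨b', hab', _⟩
    · exact ⟨c, hac, ReflTransGen.refl⟩
    · exact absurd (hg a b' hab') (by omega)
  | succ N ih =>
    intro a b c ha hab hac
    rcases hab.cases_head with rfl | ⟨b', hab', hb'b⟩
    · exact ⟨c, hac, ReflTransGen.refl⟩
    rcases hac.cases_head with rfl | ⟨c', hac', hc'c⟩
    · exact ⟨b, ReflTransGen.refl, hab⟩
    obtain ⟨d, hbd, hcd⟩ := lc a b' c' hab' hac'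
    obtain ⟨e, hbe, hde⟩ := ih b' b d (by have := hg a b' hab'; omega) hb'b hbd
    obtain ⟨f, hcf, hef⟩ := ih c' c e (by have := hg a c' hac'; omega) hc'c (hcd.trans hde)
    exact ⟨f, hbe.trans hef, hcf⟩

lemma nf_unique (hg : ∀ a b, r a b → g b < g a)
    (lc : ∀ a b c, r a b → r a c → ∃ d, ReflTransGen r b d ∧ ReflTransGen r c d)
    {a b c : α} (hab : ReflTransGen r a b) (hac : ReflTransGen r a c)
    (hb : ∀ x, ¬ r b x) (hc : ∀ x, ¬ r c x) : b = c := by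
  obtain ⟨d, hbd, hcd⟩ := newman r g hg lc (g a) a b c le_rfl hab hac
  rcases hbd.cases_head with rfl | ⟨x, hx, _⟩
  · rcases hcd.cases_head with rfl | ⟨y, hy, _⟩
    · rfl
    · exact absurd hy (hc y)
  · exact absurd hx (hb x)

end Generic

lemma flipR_step (cond : Fin n → Fin n → Prop) (p : Equiv.Perm (Fin n)) (m : ℕ)
    (hm : m + 1 < n) (hc : cond (p ⟨m, by omega⟩) (p ⟨m + 1, hm⟩)) (hd : Danger ⇑p m hm) :
    FlipR cond p (flipPerm p m hm) :=
  ⟨m, hm, hc, hd, flipPerm_swapAt p m hm⟩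

/-- Two flips at far-apart positions commute. -/
lemma far_eq {p q1 q2 d d' : Equiv.Perm (Fin n)} {m1 m2 : ℕ} {hm1 : m1 + 1 < n}
    {hm2 : m2 + 1 < n} (hsep : m1 + 2 ≤ m2)
    (hs1 : SwapAt ⇑p ⇑q1 m1 hm1) (sd : SwapAt ⇑q1 ⇑d m2 hm2)
    (hs2 : SwapAt ⇑p ⇑q2 m2 hm2) (sd' : SwapAt ⇑q2 ⇑d' m1 hm1) : d = d' := by
  apply Equiv.ext
  intro x
  by_cases e1 : (x : ℕ) = m1
  · have hx : x = ⟨m1, by omega⟩ := Fin.ext (show (x : ℕ) = m1 by omega)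
    rw [hx, sd.2.2 ⟨m1, by omega⟩ (show m1 ≠ m2 by omega) (show m1 ≠ m2 + 1 by omega),
      hs1.1, sd'.1, hs2.2.2 ⟨m1 + 1, hm1⟩ (show m1 + 1 ≠ m2 by omega)
        (show m1 + 1 ≠ m2 + 1 by omega)]
  · by_cases e2 : (x : ℕ) = m1 + 1
    · have hx : x = ⟨m1 + 1, hm1⟩ := Fin.ext (show (x : ℕ) = m1 + 1 by omega)
      rw [hx, sd.2.2 ⟨m1 + 1, hm1⟩ (show m1 + 1 ≠ m2 by omega)
          (show m1 + 1 ≠ m2 + 1 by omega), hs1.2.1, sd'.2.1,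
        hs2.2.2 ⟨m1, by omega⟩ (show m1 ≠ m2 by omega) (show m1 ≠ m2 + 1 by omega)]
    · by_cases e3 : (x : ℕ) = m2
      · have hx : x = ⟨m2, by omega⟩ := Fin.ext (show (x : ℕ) = m2 by omega)
        rw [hx, sd.1, hs1.2.2 ⟨m2 + 1, hm2⟩ (show m2 + 1 ≠ m1 by omega)
            (show m2 + 1 ≠ m1 + 1 by omega), sd'.2.2 ⟨m2, by omega⟩ (show m2 ≠ m1 by omega)
            (show m2 ≠ m1 + 1 by omega), hs2.1]
      · by_cases e4 : (x : ℕ) = m2 + 1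
        · have hx : x = ⟨m2 + 1, hm2⟩ := Fin.ext (show (x : ℕ) = m2 + 1 by omega)
          rw [hx, sd.2.1, hs1.2.2 ⟨m2, by omega⟩ (show m2 ≠ m1 by omega)
              (show m2 ≠ m1 + 1 by omega), sd'.2.2 ⟨m2 + 1, hm2⟩ (show m2 + 1 ≠ m1 by omega)
              (show m2 + 1 ≠ m1 + 1 by omega), hs2.2.1]
        · rw [sd.2.2 x e3 e4, hs1.2.2 x e1 e2, sd'.2.2 x e1 e2, hs2.2.2 x e3 e4]

/-- Braid: the two 3-step flip chains at adjacent positions agree. -/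
lemma braid_eq {p q1 r1 r2 q2 s1 s2 : Equiv.Perm (Fin n)} {m : ℕ} {hm : m + 1 < n}
    {hm2 : m + 1 + 1 < n}
    (hs1 : SwapAt ⇑p ⇑q1 m hm) (sr1 : SwapAt ⇑q1 ⇑r1 (m + 1) hm2)
    (sr2 : SwapAt ⇑r1 ⇑r2 m hm)
    (hs2 : SwapAt ⇑p ⇑q2 (m + 1) hm2) (ss1 : SwapAt ⇑q2 ⇑s1 m hm)
    (ss2 : SwapAt ⇑s1 ⇑s2 (m + 1) hm2) : r2 = s2 := by
  apply Equiv.ext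
  intro x
  by_cases e1 : (x : ℕ) = m
  · have hx : x = ⟨m, by omega⟩ := Fin.ext (show (x : ℕ) = m by omega)
    rw [hx, sr2.1, sr1.1,
      hs1.2.2 ⟨m + 1 + 1, hm2⟩ (show m + 1 + 1 ≠ m by omega) (show m + 1 + 1 ≠ m + 1 by omega),
      ss2.2.2 ⟨m, by omega⟩ (show m ≠ m + 1 by omega) (show m ≠ m + 1 + 1 by omega),
      ss1.1, hs2.1]
  · by_cases e2 : (x : ℕ) = m + 1
    · have hx : x = ⟨m + 1, hm⟩ := Fin.ext (show (x : ℕ) = m + 1 by omega)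
      rw [hx, sr2.2.1, sr1.2.2 ⟨m, by omega⟩ (show m ≠ m + 1 by omega)
          (show m ≠ m + 1 + 1 by omega), hs1.1,
        ss2.1, ss1.2.2 ⟨m + 1 + 1, hm2⟩ (show m + 1 + 1 ≠ m by omega)
          (show m + 1 + 1 ≠ m + 1 by omega), hs2.2.1]
    · by_cases e3 : (x : ℕ) = m + 1 + 1
      · have hx : x = ⟨m + 1 + 1, hm2⟩ := Fin.ext (show (x : ℕ) = m + 1 + 1 by omega)
        rw [hx, sr2.2.2 ⟨m + 1 + 1, hm2⟩ (show m + 1 + 1 ≠ m by omega)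
            (show m + 1 + 1 ≠ m + 1 by omega), sr1.2.1, hs1.2.1,
          ss2.2.1, ss1.2.1, hs2.2.2 ⟨m, by omega⟩ (show m ≠ m + 1 by omega)
            (show m ≠ m + 1 + 1 by omega)]
      · rw [sr2.2.2 x e1 e2, sr1.2.2 x e2 e3, hs1.2.2 x e1 e2,
          ss2.2.2 x e2 e3, ss1.2.2 x e1 e2, hs2.2.2 x e2 e3]

lemma lc_far (cond : Fin n → Fin n → Prop) {p q1 q2 : Equiv.Perm (Fin n)} {m1 m2 : ℕ}
    {hm1 : m1 + 1 < n} {hm2 : m2 + 1 < n} (hsep : m1 + 2 ≤ m2)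
    (hc1 : cond (p ⟨m1, by omega⟩) (p ⟨m1 + 1, hm1⟩)) (hd1 : Danger ⇑p m1 hm1)
    (hs1 : SwapAt ⇑p ⇑q1 m1 hm1)
    (hc2 : cond (p ⟨m2, by omega⟩) (p ⟨m2 + 1, hm2⟩)) (hd2 : Danger ⇑p m2 hm2)
    (hs2 : SwapAt ⇑p ⇑q2 m2 hm2) :
    ∃ d, FlipR cond q1 d ∧ FlipR cond q2 d := by
  have sd := flipPerm_swapAt q1 m2 hm2
  have sd' := flipPerm_swapAt q2 m1 hm1
  have hdd : flipPerm q1 m2 hm2 = flipPerm q2 m1 hm1 := far_eq hsep hs1 sd hs2 sd'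
  refine ⟨flipPerm q1 m2 hm2, ⟨m2, hm2, ?_, ?_, sd⟩, ⟨m1, hm1, ?_, ?_, hdd ▸ sd'⟩⟩
  · rw [hs1.2.2 ⟨m2, by omega⟩ (show m2 ≠ m1 by omega) (show m2 ≠ m1 + 1 by omega),
      hs1.2.2 ⟨m2 + 1, hm2⟩ (show m2 + 1 ≠ m1 by omega) (show m2 + 1 ≠ m1 + 1 by omega)]
    exact hc2
  · rw [Danger, hs1.2.2 ⟨m2, by omega⟩ (show m2 ≠ m1 by omega) (show m2 ≠ m1 + 1 by omega),
      hs1.2.2 ⟨m2 + 1, hm2⟩ (show m2 + 1 ≠ m1 by omega) (show m2 + 1 ≠ m1 + 1 by omega)]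
    exact incPair_congr (fun x hx => hs1.2.2 x (by omega) (by omega)) hd2
  · rw [hs2.2.2 ⟨m1, by omega⟩ (show m1 ≠ m2 by omega) (show m1 ≠ m2 + 1 by omega),
      hs2.2.2 ⟨m1 + 1, hm1⟩ (show m1 + 1 ≠ m2 by omega) (show m1 + 1 ≠ m2 + 1 by omega)]
    exact hc1
  · rw [Danger, hs2.2.2 ⟨m1, by omega⟩ (show m1 ≠ m2 by omega) (show m1 ≠ m2 + 1 by omega),
      hs2.2.2 ⟨m1 + 1, hm1⟩ (show m1 + 1 ≠ m2 by omega) (show m1 + 1 ≠ m2 + 1 by omega)]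
    exact keyL hs2 hd2 (show m1 + 1 < m2 by omega) hd1

lemma lc_adj_desc {p q1 q2 : Equiv.Perm (Fin n)} {m : ℕ} {hm : m + 1 < n}
    {hm2 : m + 1 + 1 < n}
    (hc1 : p ⟨m + 1, hm⟩ < p ⟨m, by omega⟩) (hd1 : Danger ⇑p m hm)
    (hs1 : SwapAt ⇑p ⇑q1 m hm)
    (hc2 : p ⟨m + 1 + 1, hm2⟩ < p ⟨m + 1, by omega⟩) (hd2 : Danger ⇑p (m + 1) hm2)
    (hs2 : SwapAt ⇑p ⇑q2 (m + 1) hm2) :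
    ∃ d, Relation.ReflTransGen (DescR (n := n)) q1 d ∧
      Relation.ReflTransGen (DescR (n := n)) q2 d := by
  have hba : p ⟨m + 1, hm⟩ < p ⟨m, by omega⟩ := hc1
  have hcb : p ⟨m + 1 + 1, hm2⟩ < p ⟨m + 1, hm⟩ := hc2
  -- W2 : increasing pair in (c,b) strictly beyond m+2
  have W2 : IncPairIn ⇑p (m + 1 + 1) (p ⟨m + 1 + 1, hm2⟩) (p ⟨m + 1, hm⟩) := by
    have h := hd2
    rw [Danger, min_eq_right hcb.le, max_eq_left hcb.le] at h
    exact h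
  -- W1' : increasing pair in (b,a) strictly beyond m+2
  have W1' : IncPairIn ⇑p (m + 1 + 1) (p ⟨m + 1, hm⟩) (p ⟨m, by omega⟩) := by
    have h := hd1
    rw [Danger, min_eq_right hba.le, max_eq_left hba.le] at h
    obtain ⟨j, k, hj, hk, h1, h2, h3, h4, h5⟩ := h
    by_cases e : j = m + 1 + 1
    · subst e
      exact absurd h3 (lt_asymm hcb)
    · exact ⟨j, k, hj, hk, by omega, h2, h3, h4, h5⟩
  -- chain from q1
  have sr1 := flipPerm_swapAt q1 (m + 1) hm2
  set r1 := flipPerm q1 (m + 1) hm2 with hr1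
  have sr2 := flipPerm_swapAt r1 m hm
  set r2 := flipPerm r1 m hm with hr2
  have Aq1 : ∀ x : Fin n, m + 1 + 1 < (x : ℕ) → q1 x = p x :=
    fun x hx => hs1.2.2 x (by omega) (by omega)
  have Ar1 : ∀ x : Fin n, m + 1 + 1 < (x : ℕ) → r1 x = p x :=
    fun x hx => (sr1.2.2 x (by omega) (by omega)).trans (hs1.2.2 x (by omega) (by omega))
  have step1 : DescR q1 r1 := by
    refine ⟨m + 1, hm2, ?_, ?_, sr1⟩
    · rw [hs1.2.1, hs1.2.2 ⟨m + 1 + 1, hm2⟩ (show m + 1 + 1 ≠ m by omega)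
        (show m + 1 + 1 ≠ m + 1 by omega)]
      exact hcb.trans hba
    · rw [Danger, hs1.2.1, hs1.2.2 ⟨m + 1 + 1, hm2⟩ (show m + 1 + 1 ≠ m by omega)
        (show m + 1 + 1 ≠ m + 1 by omega), min_eq_right (hcb.trans hba).le,
        max_eq_left (hcb.trans hba).le]
      exact incPair_congr Aq1 (incPair_mono_uv le_rfl hba.le W2)
  have step2 : DescR r1 r2 := by
    refine ⟨m, hm, ?_, ?_, sr2⟩
    · rw [sr1.1, hs1.2.2 ⟨m + 1 + 1, hm2⟩ (show m + 1 + 1 ≠ m by omega)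
        (show m + 1 + 1 ≠ m + 1 by omega),
        sr1.2.2 ⟨m, by omega⟩ (show m ≠ m + 1 by omega) (show m ≠ m + 1 + 1 by omega), hs1.1]
      exact hcb
    · rw [Danger, sr1.1, hs1.2.2 ⟨m + 1 + 1, hm2⟩ (show m + 1 + 1 ≠ m by omega)
        (show m + 1 + 1 ≠ m + 1 by omega),
        sr1.2.2 ⟨m, by omega⟩ (show m ≠ m + 1 by omega) (show m ≠ m + 1 + 1 by omega), hs1.1,
        min_eq_right hcb.le, max_eq_left hcb.le]
      exact incPair_mono_t (by omega) (incPair_congr Ar1 W2)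
  -- chain from q2
  have ss1 := flipPerm_swapAt q2 m hm
  set s1 := flipPerm q2 m hm with hsd1
  have ss2 := flipPerm_swapAt s1 (m + 1) hm2
  set s2 := flipPerm s1 (m + 1) hm2 with hsd2
  have Aq2 : ∀ x : Fin n, m + 1 + 1 < (x : ℕ) → q2 x = p x :=
    fun x hx => hs2.2.2 x (by omega) (by omega)
  have As1 : ∀ x : Fin n, m + 1 + 1 < (x : ℕ) → s1 x = p x :=
    fun x hx => (ss1.2.2 x (by omega) (by omega)).trans (hs2.2.2 x (by omega) (by omega))
  have step1' : DescR q2 s1 := by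
    refine ⟨m, hm, ?_, ?_, ss1⟩
    · rw [hs2.1, hs2.2.2 ⟨m, by omega⟩ (show m ≠ m + 1 by omega)
        (show m ≠ m + 1 + 1 by omega)]
      exact hcb.trans hba
    · rw [Danger, hs2.1, hs2.2.2 ⟨m, by omega⟩ (show m ≠ m + 1 by omega)
        (show m ≠ m + 1 + 1 by omega), min_eq_right (hcb.trans hba).le,
        max_eq_left (hcb.trans hba).le]
      exact incPair_mono_t (by omega) (incPair_congr Aq2 (incPair_mono_uv hcb.le le_rfl W1'))
  have step2' : DescR s1 s2 := by
    refine ⟨m + 1, hm2, ?_, ?_, ss2⟩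
    · rw [ss1.2.1, hs2.2.2 ⟨m, by omega⟩ (show m ≠ m + 1 by omega)
        (show m ≠ m + 1 + 1 by omega),
        ss1.2.2 ⟨m + 1 + 1, hm2⟩ (show m + 1 + 1 ≠ m by omega)
        (show m + 1 + 1 ≠ m + 1 by omega), hs2.2.1]
      exact hba
    · rw [Danger, ss1.2.1, hs2.2.2 ⟨m, by omega⟩ (show m ≠ m + 1 by omega)
        (show m ≠ m + 1 + 1 by omega),
        ss1.2.2 ⟨m + 1 + 1, hm2⟩ (show m + 1 + 1 ≠ m by omega)
        (show m + 1 + 1 ≠ m + 1 by omega), hs2.2.1,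
        min_eq_right hba.le, max_eq_left hba.le]
      exact incPair_congr As1 W1'
  have hfinal : r2 = s2 := braid_eq hs1 sr1 sr2 hs2 ss1 ss2
  refine ⟨r2, Relation.ReflTransGen.head step1 (Relation.ReflTransGen.single step2), ?_⟩
  rw [hfinal]
  exact Relation.ReflTransGen.head step1' (Relation.ReflTransGen.single step2')

lemma lc_adj_asc {p q1 q2 : Equiv.Perm (Fin n)} {m : ℕ} {hm : m + 1 < n}
    {hm2 : m + 1 + 1 < n}
    (hc1 : p ⟨m, by omega⟩ < p ⟨m + 1, hm⟩) (hd1 : Danger ⇑p m hm)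
    (hs1 : SwapAt ⇑p ⇑q1 m hm)
    (hc2 : p ⟨m + 1, by omega⟩ < p ⟨m + 1 + 1, hm2⟩) (hd2 : Danger ⇑p (m + 1) hm2)
    (hs2 : SwapAt ⇑p ⇑q2 (m + 1) hm2) :
    ∃ d, Relation.ReflTransGen (AscR (n := n)) q1 d ∧
      Relation.ReflTransGen (AscR (n := n)) q2 d := by
  have hab : p ⟨m, by omega⟩ < p ⟨m + 1, hm⟩ := hc1
  have hbc : p ⟨m + 1, hm⟩ < p ⟨m + 1 + 1, hm2⟩ := hc2
  have W2 : IncPairIn ⇑p (m + 1 + 1) (p ⟨m + 1, hm⟩) (p ⟨m + 1 + 1, hm2⟩) := by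
    have h := hd2
    rw [Danger, min_eq_left hbc.le, max_eq_right hbc.le] at h
    exact h
  have W1' : IncPairIn ⇑p (m + 1 + 1) (p ⟨m, by omega⟩) (p ⟨m + 1, hm⟩) := by
    have h := hd1
    rw [Danger, min_eq_left hab.le, max_eq_right hab.le] at h
    obtain ⟨j, k, hj, hk, h1, h2, h3, h4, h5⟩ := h
    by_cases e : j = m + 1 + 1
    · subst e
      exact absurd (h4.trans h5) (lt_asymm hbc)
    · exact ⟨j, k, hj, hk, by omega, h2, h3, h4, h5⟩
  have sr1 := flipPerm_swapAt q1 (m + 1) hm2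
  set r1 := flipPerm q1 (m + 1) hm2 with hr1
  have sr2 := flipPerm_swapAt r1 m hm
  set r2 := flipPerm r1 m hm with hr2
  have Aq1 : ∀ x : Fin n, m + 1 + 1 < (x : ℕ) → q1 x = p x :=
    fun x hx => hs1.2.2 x (by omega) (by omega)
  have Ar1 : ∀ x : Fin n, m + 1 + 1 < (x : ℕ) → r1 x = p x :=
    fun x hx => (sr1.2.2 x (by omega) (by omega)).trans (hs1.2.2 x (by omega) (by omega))
  have step1 : AscR q1 r1 := by
    refine ⟨m + 1, hm2, ?_, ?_, sr1⟩
    · rw [hs1.2.1, hs1.2.2 ⟨m + 1 + 1, hm2⟩ (show m + 1 + 1 ≠ m by omega)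
        (show m + 1 + 1 ≠ m + 1 by omega)]
      exact hab.trans hbc
    · rw [Danger, hs1.2.1, hs1.2.2 ⟨m + 1 + 1, hm2⟩ (show m + 1 + 1 ≠ m by omega)
        (show m + 1 + 1 ≠ m + 1 by omega), min_eq_left (hab.trans hbc).le,
        max_eq_right (hab.trans hbc).le]
      exact incPair_congr Aq1 (incPair_mono_uv hab.le le_rfl W2)
  have step2 : AscR r1 r2 := by
    refine ⟨m, hm, ?_, ?_, sr2⟩
    · rw [sr1.1, hs1.2.2 ⟨m + 1 + 1, hm2⟩ (show m + 1 + 1 ≠ m by omega)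
        (show m + 1 + 1 ≠ m + 1 by omega),
        sr1.2.2 ⟨m, by omega⟩ (show m ≠ m + 1 by omega) (show m ≠ m + 1 + 1 by omega), hs1.1]
      exact hbc
    · rw [Danger, sr1.1, hs1.2.2 ⟨m + 1 + 1, hm2⟩ (show m + 1 + 1 ≠ m by omega)
        (show m + 1 + 1 ≠ m + 1 by omega),
        sr1.2.2 ⟨m, by omega⟩ (show m ≠ m + 1 by omega) (show m ≠ m + 1 + 1 by omega), hs1.1,
        min_eq_left hbc.le, max_eq_right hbc.le]
      exact incPair_mono_t (by omega) (incPair_congr Ar1 W2)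
  have ss1 := flipPerm_swapAt q2 m hm
  set s1 := flipPerm q2 m hm with hsd1
  have ss2 := flipPerm_swapAt s1 (m + 1) hm2
  set s2 := flipPerm s1 (m + 1) hm2 with hsd2
  have Aq2 : ∀ x : Fin n, m + 1 + 1 < (x : ℕ) → q2 x = p x :=
    fun x hx => hs2.2.2 x (by omega) (by omega)
  have As1 : ∀ x : Fin n, m + 1 + 1 < (x : ℕ) → s1 x = p x :=
    fun x hx => (ss1.2.2 x (by omega) (by omega)).trans (hs2.2.2 x (by omega) (by omega))
  have step1' : AscR q2 s1 := by
    refine ⟨m, hm, ?_, ?_, ss1⟩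
    · rw [hs2.1, hs2.2.2 ⟨m, by omega⟩ (show m ≠ m + 1 by omega)
        (show m ≠ m + 1 + 1 by omega)]
      exact hab.trans hbc
    · rw [Danger, hs2.1, hs2.2.2 ⟨m, by omega⟩ (show m ≠ m + 1 by omega)
        (show m ≠ m + 1 + 1 by omega), min_eq_left (hab.trans hbc).le,
        max_eq_right (hab.trans hbc).le]
      exact incPair_mono_t (by omega) (incPair_congr Aq2 (incPair_mono_uv le_rfl hbc.le W1'))
  have step2' : AscR s1 s2 := by
    refine ⟨m + 1, hm2, ?_, ?_, ss2⟩
    · rw [ss1.2.1, hs2.2.2 ⟨m, by omega⟩ (show m ≠ m + 1 by omega)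
        (show m ≠ m + 1 + 1 by omega),
        ss1.2.2 ⟨m + 1 + 1, hm2⟩ (show m + 1 + 1 ≠ m by omega)
        (show m + 1 + 1 ≠ m + 1 by omega), hs2.2.1]
      exact hab
    · rw [Danger, ss1.2.1, hs2.2.2 ⟨m, by omega⟩ (show m ≠ m + 1 by omega)
        (show m ≠ m + 1 + 1 by omega),
        ss1.2.2 ⟨m + 1 + 1, hm2⟩ (show m + 1 + 1 ≠ m by omega)
        (show m + 1 + 1 ≠ m + 1 by omega), hs2.2.1,
        min_eq_left hab.le, max_eq_right hab.le]
      exact incPair_congr As1 W1'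
  have hfinal : r2 = s2 := braid_eq hs1 sr1 sr2 hs2 ss1 ss2
  refine ⟨r2, Relation.ReflTransGen.head step1 (Relation.ReflTransGen.single step2), ?_⟩
  rw [hfinal]
  exact Relation.ReflTransGen.head step1' (Relation.ReflTransGen.single step2')

lemma lc_desc_aux {p q1 q2 : Equiv.Perm (Fin n)} {m1 m2 : ℕ} {hm1 : m1 + 1 < n}
    {hm2 : m2 + 1 < n} (hle : m1 ≤ m2)
    (hc1 : p ⟨m1 + 1, hm1⟩ < p ⟨m1, by omega⟩) (hd1 : Danger ⇑p m1 hm1)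
    (hs1 : SwapAt ⇑p ⇑q1 m1 hm1)
    (hc2 : p ⟨m2 + 1, hm2⟩ < p ⟨m2, by omega⟩) (hd2 : Danger ⇑p m2 hm2)
    (hs2 : SwapAt ⇑p ⇑q2 m2 hm2) :
    ∃ d, Relation.ReflTransGen (DescR (n := n)) q1 d ∧
      Relation.ReflTransGen (DescR (n := n)) q2 d := by
  by_cases he : m1 = m2
  · subst he
    have : q1 = q2 := swapAt_unique hs1 hs2
    subst this
    exact ⟨q1, Relation.ReflTransGen.refl, Relation.ReflTransGen.refl⟩
  · by_cases hadj : m2 = m1 + 1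
    · subst hadj
      exact lc_adj_desc hc1 hd1 hs1 hc2 hd2 hs2
    · obtain ⟨d, f1, f2⟩ := lc_far (fun a b => b < a) (show m1 + 2 ≤ m2 by omega)
        hc1 hd1 hs1 hc2 hd2 hs2
      exact ⟨d, Relation.ReflTransGen.single f1, Relation.ReflTransGen.single f2⟩

lemma lc_desc (p q1 q2 : Equiv.Perm (Fin n)) (h1 : DescR p q1) (h2 : DescR p q2) :
    ∃ d, Relation.ReflTransGen (DescR (n := n)) q1 d ∧
      Relation.ReflTransGen (DescR (n := n)) q2 d := by
  obtain ⟨m1, hm1, hc1, hd1, hs1⟩ := h1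
  obtain ⟨m2, hm2, hc2, hd2, hs2⟩ := h2
  rcases le_total m1 m2 with h | h
  · exact lc_desc_aux h hc1 hd1 hs1 hc2 hd2 hs2
  · obtain ⟨d, f1, f2⟩ := lc_desc_aux h hc2 hd2 hs2 hc1 hd1 hs1
    exact ⟨d, f2, f1⟩

lemma lc_asc_aux {p q1 q2 : Equiv.Perm (Fin n)} {m1 m2 : ℕ} {hm1 : m1 + 1 < n}
    {hm2 : m2 + 1 < n} (hle : m1 ≤ m2)
    (hc1 : p ⟨m1, by omega⟩ < p ⟨m1 + 1, hm1⟩) (hd1 : Danger ⇑p m1 hm1)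
    (hs1 : SwapAt ⇑p ⇑q1 m1 hm1)
    (hc2 : p ⟨m2, by omega⟩ < p ⟨m2 + 1, hm2⟩) (hd2 : Danger ⇑p m2 hm2)
    (hs2 : SwapAt ⇑p ⇑q2 m2 hm2) :
    ∃ d, Relation.ReflTransGen (AscR (n := n)) q1 d ∧
      Relation.ReflTransGen (AscR (n := n)) q2 d := by
  by_cases he : m1 = m2
  · subst he
    have : q1 = q2 := swapAt_unique hs1 hs2
    subst this
    exact ⟨q1, Relation.ReflTransGen.refl, Relation.ReflTransGen.refl⟩
  · by_cases hadj : m2 = m1 + 1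
    · subst hadj
      exact lc_adj_asc hc1 hd1 hs1 hc2 hd2 hs2
    · obtain ⟨d, f1, f2⟩ := lc_far (fun a b => a < b) (show m1 + 2 ≤ m2 by omega)
        hc1 hd1 hs1 hc2 hd2 hs2
      exact ⟨d, Relation.ReflTransGen.single f1, Relation.ReflTransGen.single f2⟩

lemma lc_asc (p q1 q2 : Equiv.Perm (Fin n)) (h1 : AscR p q1) (h2 : AscR p q2) :
    ∃ d, Relation.ReflTransGen (AscR (n := n)) q1 d ∧
      Relation.ReflTransGen (AscR (n := n)) q2 d := by
  obtain ⟨m1, hm1, hc1, hd1, hs1⟩ := h1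
  obtain ⟨m2, hm2, hc2, hd2, hs2⟩ := h2
  rcases le_total m1 m2 with h | h
  · exact lc_asc_aux h hc1 hd1 hs1 hc2 hd2 hs2
  · obtain ⟨d, f1, f2⟩ := lc_asc_aux h hc2 hd2 hs2 hc1 hd1 hs1
    exact ⟨d, f2, f1⟩

lemma rtg_desc_asc {p q : Equiv.Perm (Fin n)}
    (h : Relation.ReflTransGen (DescR (n := n)) p q) :
    Relation.ReflTransGen (AscR (n := n)) q p := by
  induction h with
  | refl => exact Relation.ReflTransGen.refl
  | tail _ hstep ih => exact Relation.ReflTransGen.head (descR_iff_ascR.mp hstep) ih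

lemma rtg_asc_desc {p q : Equiv.Perm (Fin n)}
    (h : Relation.ReflTransGen (AscR (n := n)) p q) :
    Relation.ReflTransGen (DescR (n := n)) q p := by
  induction h with
  | refl => exact Relation.ReflTransGen.refl
  | tail _ hstep ih => exact Relation.ReflTransGen.head (descR_iff_ascR.mpr hstep) ih

lemma contains41_iff (p : Equiv.Perm (Fin n)) :
    Contains41d2d3 ⇑p ↔ ∃ q, DescR p q := by
  constructor
  · rintro ⟨i, j, k, hi, hk, hij, hjk, h1, h2, h3⟩
    have hdesc : p ⟨i + 1, hi⟩ < p ⟨i, by omega⟩ := h1.trans (h2.trans h3)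
    refine ⟨flipPerm p i hi, i, hi, hdesc, ?_, flipPerm_swapAt p i hi⟩
    rw [Danger, min_eq_right hdesc.le, max_eq_left hdesc.le]
    exact ⟨j, k, by omega, hk, hij, hjk, h1, h2, h3⟩
  · rintro ⟨q, m, hm, hc, hd, _⟩
    rw [Danger, min_eq_right hc.le, max_eq_left hc.le] at hd
    obtain ⟨j, k, hj, hk, h1, h2, h3, h4, h5⟩ := hd
    exact ⟨m, j, k, hm, hk, h1, h2, h3, h4, h5⟩

lemma contains14_iff (p : Equiv.Perm (Fin n)) :
    Contains14d2d3 ⇑p ↔ ∃ q, AscR p q := by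
  constructor
  · rintro ⟨i, j, k, hi, hk, hij, hjk, h1, h2, h3⟩
    have hasc : p ⟨i, by omega⟩ < p ⟨i + 1, hi⟩ := h1.trans (h2.trans h3)
    refine ⟨flipPerm p i hi, i, hi, hasc, ?_, flipPerm_swapAt p i hi⟩
    rw [Danger, min_eq_left hasc.le, max_eq_right hasc.le]
    exact ⟨j, k, by omega, hk, hij, hjk, h1, h2, h3⟩
  · rintro ⟨q, m, hm, hc, hd, _⟩
    rw [Danger, min_eq_left hc.le, max_eq_right hc.le] at hd
    obtain ⟨j, k, hj, hk, h1, h2, h3, h4, h5⟩ := hd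
    exact ⟨m, j, k, hm, hk, h1, h2, h3, h4, h5⟩

lemma gDesc_lt {p q : Equiv.Perm (Fin n)} (h : DescR p q) :
    n * n * n - wsum q < n * n * n - wsum p := by
  have h1 := descR_wsum h
  have h2 := wsum_le q
  omega

open Relation in
theorem main_card (n : ℕ) :
    Nat.card {π : Equiv.Perm (Fin n) // ¬ Contains14d2d3 ⇑π} =
      Nat.card {π : Equiv.Perm (Fin n) // ¬ Contains41d2d3 ⇑π} := by
  classical
  have exD : ∀ p : Equiv.Perm (Fin n), ∃ q, ReflTransGen (DescR (n := n)) p q ∧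
      ∀ r, ¬ DescR q r :=
    fun p => rtg_nf (DescR (n := n)) (fun p => n * n * n - wsum p)
      (fun a b h => gDesc_lt h) (n * n * n - wsum p) p le_rfl
  have exA : ∀ p : Equiv.Perm (Fin n), ∃ q, ReflTransGen (AscR (n := n)) p q ∧
      ∀ r, ¬ AscR q r :=
    fun p => rtg_nf (AscR (n := n)) wsum (fun a b h => ascR_wsum h) (wsum p) p le_rfl
  let F : {π : Equiv.Perm (Fin n) // ¬ Contains14d2d3 ⇑π} →
      {π : Equiv.Perm (Fin n) // ¬ Contains41d2d3 ⇑π} :=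
    fun x => ⟨(exD x.1).choose, by
      rw [contains41_iff]
      rintro ⟨r, hr⟩
      exact (exD x.1).choose_spec.2 r hr⟩
  let G : {π : Equiv.Perm (Fin n) // ¬ Contains41d2d3 ⇑π} →
      {π : Equiv.Perm (Fin n) // ¬ Contains14d2d3 ⇑π} :=
    fun x => ⟨(exA x.1).choose, by
      rw [contains14_iff]
      rintro ⟨r, hr⟩
      exact (exA x.1).choose_spec.2 r hr⟩
  have hF : Function.Injective F := by
    intro x y hxy
    have hq : (exD x.1).choose = (exD y.1).choose := congrArg Subtype.val hxy
    have a1 : ReflTransGen (AscR (n := n)) (exD x.1).choose x.1 :=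
      rtg_desc_asc (exD x.1).choose_spec.1
    have a2 : ReflTransGen (AscR (n := n)) (exD x.1).choose y.1 := by
      rw [hq]
      exact rtg_desc_asc (exD y.1).choose_spec.1
    have n1 : ∀ r, ¬ AscR x.1 r := by
      intro r hr
      exact x.2 ((contains14_iff x.1).mpr ⟨r, hr⟩)
    have n2 : ∀ r, ¬ AscR y.1 r := by
      intro r hr
      exact y.2 ((contains14_iff y.1).mpr ⟨r, hr⟩)
    exact Subtype.ext (nf_unique (AscR (n := n)) wsum (fun a b h => ascR_wsum h)
      lc_asc a1 a2 n1 n2)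
  have hG : Function.Injective G := by
    intro x y hxy
    have hq : (exA x.1).choose = (exA y.1).choose := congrArg Subtype.val hxy
    have a1 : ReflTransGen (DescR (n := n)) (exA x.1).choose x.1 :=
      rtg_asc_desc (exA x.1).choose_spec.1
    have a2 : ReflTransGen (DescR (n := n)) (exA x.1).choose y.1 := by
      rw [hq]
      exact rtg_asc_desc (exA y.1).choose_spec.1
    have n1 : ∀ r, ¬ DescR x.1 r := by
      intro r hr
      exact x.2 ((contains41_iff x.1).mpr ⟨r, hr⟩)
    have n2 : ∀ r, ¬ DescR y.1 r := by
      intro r hr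
      exact y.2 ((contains41_iff y.1).mpr ⟨r, hr⟩)
    exact Subtype.ext (nf_unique (DescR (n := n)) (fun p => n * n * n - wsum p)
      (fun a b h => gDesc_lt h) lc_desc a1 a2 n1 n2)
  exact le_antisymm (Nat.card_le_card_of_injective F hF)
    (Nat.card_le_card_of_injective G hG)

end Wilf1423

theorem wilf_14d2d3_41d2d3 (n : ℕ) :
    Nat.card {π : Equiv.Perm (Fin n) // ¬ Contains14d2d3 ⇑π} =
      Nat.card {π : Equiv.Perm (Fin n) // ¬ Contains41d2d3 ⇑π} :=
  Wilf1423.main_card n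
end

section
/- Let σ = σ_1⋯σ_k-σ_{k+1} be a vincular pattern with 1 < σ_{k+1} < k+1, let ℓ be the index with σ_ℓ = σ_{k+1}−1 and m the index with σ_m = σ_{k+1}+1. If π is a permutation of length n whose first k entries are order-isomorphic to σ_1⋯σ_k and π_m − π_ℓ > 1, then π contains σ. -/
/-- `π` contains the vincular pattern `σ₁⋯σ_k-σ_{k+1}` (one dash before the last
letter): there is an occurrence whose first `k` letters occupy consecutive
positions and whose last letter occurs strictly later. -/
def ContainsDashed {k n : ℕ} (σ : Fin (k + 1) → Fin (k + 1)) (π : Fin n → Fin n) : Prop :=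
  ∃ g : Fin (k + 1) → Fin n, StrictMono g ∧
    (∀ a : ℕ, (ha : a + 1 < k) →
      ((g ⟨a + 1, by omega⟩ : ℕ) = (g ⟨a, by omega⟩ : ℕ) + 1)) ∧
    (∀ a b : Fin (k + 1), σ a < σ b ↔ π (g a) < π (g b))

set_option maxHeartbeats 1000000 in
theorem prefix_forces_containment_middle (k n v ℓ m : ℕ)
    (hv1 : 1 ≤ v) (hv2 : v ≤ k - 1) (hℓ : ℓ < k) (hm : m < k)
    (σ : Fin (k + 1) → Fin (k + 1)) (hσ : Function.Bijective σ)
    (hlast : σ ⟨k, by omega⟩ = ⟨v, by omega⟩)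
    (hℓval : σ ⟨ℓ, by omega⟩ = ⟨v - 1, by omega⟩)
    (hmval : σ ⟨m, by omega⟩ = ⟨v + 1, by omega⟩)
    (π : Equiv.Perm (Fin n)) (hkn : k ≤ n)
    (hpre : ∀ (a b : ℕ) (ha : a < k) (hb : b < k),
      σ ⟨a, by omega⟩ < σ ⟨b, by omega⟩ ↔ π ⟨a, by omega⟩ < π ⟨b, by omega⟩)
    (hgap : (π ⟨ℓ, by omega⟩ : ℕ) + 1 < (π ⟨m, by omega⟩ : ℕ)) :
    ContainsDashed σ ⇑π := by
  have hk2 : 2 ≤ k := by omega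
  have hwlt : (π ⟨ℓ, by omega⟩ : ℕ) + 1 < n := lt_trans hgap (Fin.is_lt _)
  obtain ⟨w, hwval⟩ : ∃ w : Fin n, (w : ℕ) = (π ⟨ℓ, by omega⟩ : ℕ) + 1 :=
    ⟨⟨_, hwlt⟩, rfl⟩
  obtain ⟨j, hπj⟩ : ∃ j : Fin n, π j = w := ⟨π.symm w, π.apply_symm_apply w⟩
  have hπjv : (π j : ℕ) = (w : ℕ) := congrArg Fin.val hπj
  have hℓv : (σ ⟨ℓ, by omega⟩ : ℕ) = v - 1 := congrArg Fin.val hℓval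
  have hmv : (σ ⟨m, by omega⟩ : ℕ) = v + 1 := congrArg Fin.val hmval
  have hlv : (σ ⟨k, by omega⟩ : ℕ) = v := congrArg Fin.val hlast
  -- no prefix position has σ-value v
  have hne : ∀ b : ℕ, (hb : b < k) → (σ ⟨b, by omega⟩ : ℕ) ≠ v := by
    intro b hb hvb
    have hsb : σ ⟨b, by omega⟩ = σ ⟨k, by omega⟩ := (Fin.ext hvb).trans hlast.symm
    have h1 := hσ.1 hsb
    simp [Fin.mk.injEq] at h1
    omega
  -- j is at position ≥ k
  have hjk : k ≤ (j : ℕ) := by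
    by_contra h
    push_neg at h
    have hj' : π ⟨(j : ℕ), by omega⟩ = w :=
      (congrArg π (Fin.ext rfl : (⟨(j : ℕ), by omega⟩ : Fin n) = j)).trans hπj
    have hj'' : (π ⟨(j : ℕ), by omega⟩ : ℕ) = (w : ℕ) := congrArg Fin.val hj'
    have h1 : π ⟨ℓ, by omega⟩ < π ⟨(j : ℕ), by omega⟩ := Fin.lt_def.mpr (by omega)
    have h2 := Fin.lt_def.mp ((hpre ℓ (j : ℕ) hℓ h).mpr h1)
    have h3 : π ⟨(j : ℕ), by omega⟩ < π ⟨m, by omega⟩ := Fin.lt_def.mpr (by omega)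
    have h4 := Fin.lt_def.mp ((hpre (j : ℕ) m h hm).mpr h3)
    exact hne (j : ℕ) h (by omega)
  -- prefix values differ from w
  have hπne : ∀ b : ℕ, (hb : b < k) → (π ⟨b, by omega⟩ : ℕ) ≠ (w : ℕ) := by
    intro b hb hvb
    have hsb : π ⟨b, by omega⟩ = π j := (Fin.ext hvb).trans hπj.symm
    have h1 := congrArg Fin.val (π.injective hsb)
    simp at h1
    omega
  -- key order fact
  have key : ∀ b : ℕ, (hb : b < k) →
      ((σ ⟨b, by omega⟩ : ℕ) < v ↔ (π ⟨b, by omega⟩ : ℕ) < (w : ℕ)) := by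
    intro b hb
    constructor
    · intro h
      have halt := Nat.lt_or_ge (σ ⟨b, by omega⟩ : ℕ) (v - 1)
      rcases halt with h' | h'
      · have hlt : σ ⟨b, by omega⟩ < σ ⟨ℓ, by omega⟩ := Fin.lt_def.mpr (by omega)
        have h2 := Fin.lt_def.mp ((hpre b ℓ hb hℓ).mp hlt)
        omega
      · have hbv : (σ ⟨b, by omega⟩ : ℕ) = v - 1 := by omega
        have hsb : σ ⟨b, by omega⟩ = σ ⟨ℓ, by omega⟩ := (Fin.ext (by omega)).trans hℓval.symm
        have h1 := congrArg Fin.val (hσ.1 hsb)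
        simp at h1
        subst h1
        omega
    · intro h
      have h' : (π ⟨b, by omega⟩ : ℕ) ≤ (π ⟨ℓ, by omega⟩ : ℕ) := by omega
      have halt := eq_or_lt_of_le h'
      rcases halt with h'' | h''
      · have hsb : π ⟨b, by omega⟩ = π ⟨ℓ, by omega⟩ := Fin.ext h''
        have h1 := congrArg Fin.val (π.injective hsb)
        simp at h1
        subst h1
        omega
      · have h2 := Fin.lt_def.mp ((hpre b ℓ hb hℓ).mpr (Fin.lt_def.mpr h''))
        omega
  -- the embedding
  refine ⟨fun a => if h : (a : ℕ) < k then ⟨(a : ℕ), lt_of_lt_of_le h hkn⟩ else j, ?_, ?_, ?_⟩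
  · intro a b hab
    have hab' : (a : ℕ) < (b : ℕ) := hab
    by_cases ha : (a : ℕ) < k <;> by_cases hb' : (b : ℕ) < k
    · simp only [dif_pos ha, dif_pos hb']
      exact Fin.lt_def.mpr hab'
    · simp only [dif_pos ha, dif_neg hb']
      have hred : ((⟨(a : ℕ), lt_of_lt_of_le ha hkn⟩ : Fin n) : ℕ) = (a : ℕ) := rfl
      exact Fin.lt_def.mpr (by omega)
    · exact absurd hab' (by omega)
    · exact absurd hab' (by omega)
  · intro a ha
    simp only [dif_pos (show a + 1 < k from ha), dif_pos (show a < k by omega)]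
  · intro a b
    by_cases ha : (a : ℕ) < k <;> by_cases hb' : (b : ℕ) < k
    · simp only [dif_pos ha, dif_pos hb']
      have h1 := hpre (a : ℕ) (b : ℕ) ha hb'
      have ea : (⟨(a : ℕ), by omega⟩ : Fin (k+1)) = a := Fin.ext rfl
      have eb : (⟨(b : ℕ), by omega⟩ : Fin (k+1)) = b := Fin.ext rfl
      simp only [ea, eb] at h1
      exact h1
    · simp only [dif_pos ha, dif_neg hb']
      have ea : (⟨(a : ℕ), by omega⟩ : Fin (k+1)) = a := Fin.ext rfl
      have hσb : (σ b : ℕ) = v := by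
        have : σ b = σ ⟨k, by omega⟩ := congrArg σ (Fin.ext (by show (b : ℕ) = k; omega))
        have := congrArg Fin.val this
        omega
      have h1 := key (a : ℕ) ha
      simp only [ea] at h1
      have h2 := hne (a : ℕ) ha
      simp only [ea] at h2
      have h3 : π (if h : (b : ℕ) < k then (⟨(b : ℕ), lt_of_lt_of_le h hkn⟩ : Fin n) else j) = π j := by
        simp [hb']
      constructor
      · intro hh
        have := Fin.lt_def.mp hh
        exact Fin.lt_def.mpr (by omega)
      · intro hh
        have := Fin.lt_def.mp hh
        exact Fin.lt_def.mpr (by omega)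
    · simp only [dif_neg ha, dif_pos hb']
      have eb : (⟨(b : ℕ), by omega⟩ : Fin (k+1)) = b := Fin.ext rfl
      have hσa : (σ a : ℕ) = v := by
        have : σ a = σ ⟨k, by omega⟩ := congrArg σ (Fin.ext (by show (a : ℕ) = k; omega))
        have := congrArg Fin.val this
        omega
      have h1 := key (b : ℕ) hb'
      simp only [eb] at h1
      have h2 := hne (b : ℕ) hb'
      simp only [eb] at h2
      have h3 := hπne (b : ℕ) hb'
      constructor
      · intro hh
        have := Fin.lt_def.mp hh
        exact Fin.lt_def.mpr (by omega)
      · intro hh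
        have := Fin.lt_def.mp hh
        exact Fin.lt_def.mpr (by omega)
    · have hab : a = b := Fin.ext (by omega)
      subst hab
      simp
end

section
/- For every n ≥ 0, the number of permutations of length n avoiding the vincular pattern 2341 (consecutive pattern, all adjacencies required) with an additional dashed letter 5 appended, i.e. 2341-5, equals the number avoiding 1342-5, provided the consecutive patterns 2341 and 1342 are Wilf-equivalent; more generally, if consecutive patterns α and β of length k satisfy |S_n(α)| = |S_n(β)| for all n, then |S_n(α-(k+1))| = |S_n(β-(k+1))| for all n. -/
/-- `π` contains the consecutive pattern `α`: some factor of `π` of length `k`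
is order-isomorphic to `α`. -/
def ContainsConsec {k n : ℕ} (α : Fin k → Fin k) (π : Fin n → Fin n) : Prop :=
  ∃ (i : ℕ) (h : i + k ≤ n), ∀ a b : Fin k,
    α a < α b ↔
      π ⟨i + a, by have := a.isLt; omega⟩ < π ⟨i + b, by have := b.isLt; omega⟩

/-- `π` contains the vincular pattern `α-(k+1)`: some factor of length `k` is
order-isomorphic to `α` and some strictly later entry exceeds all of its
entries. -/
def ContainsConsecMax {k n : ℕ} (α : Fin k → Fin k) (π : Fin n → Fin n) : Prop :=
  ∃ (i j : ℕ) (hj : j < n) (hij : i + k ≤ j),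
    (∀ a b : Fin k,
      α a < α b ↔
        π ⟨i + a, by have := a.isLt; omega⟩ < π ⟨i + b, by have := b.isLt; omega⟩) ∧
    (∀ a : Fin k, π ⟨i + a, by have := a.isLt; omega⟩ < π ⟨j, hj⟩)


namespace WilfAux2

variable {k : ℕ}

/-- consecutive containment at the level of words -/
def CW {m : ℕ} {γ : Type*} [Preorder γ] (α : Fin k → Fin k) (w : Fin m → γ) : Prop :=
  ∃ (i : ℕ) (h : i + k ≤ m), ∀ a b : Fin k,
    α a < α b ↔
      w ⟨i + a, by have := a.isLt; omega⟩ < w ⟨i + b, by have := b.isLt; omega⟩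

/-- vincular (dashed-max) containment at the level of words -/
def MW {m : ℕ} {γ : Type*} [Preorder γ] (α : Fin k → Fin k) (w : Fin m → γ) : Prop :=
  ∃ (i j : ℕ) (hj : j < m) (hij : i + k ≤ j),
    (∀ a b : Fin k,
      α a < α b ↔
        w ⟨i + a, by have := a.isLt; omega⟩ < w ⟨i + b, by have := b.isLt; omega⟩) ∧
    (∀ a : Fin k, w ⟨i + a, by have := a.isLt; omega⟩ < w ⟨j, hj⟩)

lemma cc_iff_cw {n : ℕ} (α : Fin k → Fin k) (f : Fin n → Fin n) :
    ContainsConsec α f ↔ CW α f := Iff.rfl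

lemma ccm_iff_mw {n : ℕ} (α : Fin k → Fin k) (f : Fin n → Fin n) :
    ContainsConsecMax α f ↔ MW α f := Iff.rfl

lemma cw_congr {m : ℕ} {γ δ : Type*} [Preorder γ] [Preorder δ] {α : Fin k → Fin k}
    {w : Fin m → γ} {w' : Fin m → δ} (h : ∀ s t, w s < w t ↔ w' s < w' t) :
    CW α w ↔ CW α w' :=
  exists_congr fun _ => exists_congr fun _ => forall_congr' fun _ => forall_congr' fun _ => by
    rw [h]

lemma mw_congr {m : ℕ} {γ δ : Type*} [Preorder γ] [Preorder δ] {α : Fin k → Fin k}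
    {w : Fin m → γ} {w' : Fin m → δ} (h : ∀ s t, w s < w t ↔ w' s < w' t) :
    MW α w ↔ MW α w' :=
  exists_congr fun _ => exists_congr fun _ => exists_congr fun _ => exists_congr fun _ =>
    and_congr
      (forall_congr' fun _ => forall_congr' fun _ => by rw [h])
      (forall_congr' fun _ => by rw [h])



lemma orderIsoOfFin_symm_congr {n m : ℕ} {s s' : Finset (Fin n)} (h : s = s')
    (hs : s.card = m) (hs' : s'.card = m) {x : Fin n} (hx : x ∈ s) (hx' : x ∈ s') :
    (s.orderIsoOfFin hs).symm ⟨x, hx⟩ = (s'.orderIsoOfFin hs').symm ⟨x, hx'⟩ := by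
  subst h; rfl

/-- standardization of an injective word -/
def stdF {m n : ℕ} (w : Fin m → Fin n) (hw : Function.Injective w) : Fin m → Fin m :=
  fun t => ((Finset.univ.image w).orderIsoOfFin
      (by rw [Finset.card_image_of_injective _ hw, Finset.card_univ, Fintype.card_fin])).symm
    ⟨w t, Finset.mem_image_of_mem _ (Finset.mem_univ t)⟩

lemma stdF_lt_iff {m n : ℕ} (w : Fin m → Fin n) (hw : Function.Injective w) (s t : Fin m) :
    w s < w t ↔ stdF w hw s < stdF w hw t := by
  unfold stdF
  rw [OrderIso.lt_iff_lt]
  exact (Subtype.mk_lt_mk).symm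

lemma stdF_injective {m n : ℕ} (w : Fin m → Fin n) (hw : Function.Injective w) :
    Function.Injective (stdF w hw) := by
  intro s t h
  unfold stdF at h
  have h2 := ((Finset.univ.image w).orderIsoOfFin
      (by rw [Finset.card_image_of_injective _ hw, Finset.card_univ,
        Fintype.card_fin])).symm.injective h
  exact hw (congrArg Subtype.val h2)

/-- standardization as a permutation -/
noncomputable def stdP {m n : ℕ} (w : Fin m → Fin n) (hw : Function.Injective w) : Equiv.Perm (Fin m) :=
  Equiv.ofBijective _ (Finite.injective_iff_bijective.mp (stdF_injective w hw))

lemma stdP_apply {m n : ℕ} (w : Fin m → Fin n) (hw : Function.Injective w) :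
    ⇑(stdP w hw) = stdF w hw := rfl

lemma stdP_congr {m n : ℕ} {w w' : Fin m → Fin n} (h : w = w')
    (hw : Function.Injective w) (hw' : Function.Injective w') :
    stdP w hw = stdP w' hw' := by subst h; rfl

lemma stdP_comp {m n : ℕ} (w : Fin m → Fin n) (hw : Function.Injective w)
    (ρ : Equiv.Perm (Fin m)) (hwρ : Function.Injective (w ∘ ⇑ρ)) :
    stdP (w ∘ ⇑ρ) hwρ = stdP w hw * ρ := by
  apply Equiv.ext; intro t
  show stdF (w ∘ ⇑ρ) hwρ t = stdF w hw (ρ t)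
  have h1 : (Finset.univ.image ⇑ρ) = (Finset.univ : Finset (Fin m)) := by
    ext x
    simp only [Finset.mem_image, Finset.mem_univ, iff_true]
    exact ⟨ρ.symm x, trivial, ρ.apply_symm_apply x⟩
  have h2 : Finset.univ.image (w ∘ ⇑ρ) = Finset.univ.image w := by
    rw [← Finset.image_image, h1]
  exact orderIsoOfFin_symm_congr h2 _ _ _ _



def Lw {n : ℕ} (π : Fin (n+1) → Fin (n+1)) (p : ℕ) (hp : p ≤ n) : Fin p → Fin (n+1) :=
  fun t => π ⟨t.1, by have := t.isLt; omega⟩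

def Rw {n : ℕ} (π : Fin (n+1) → Fin (n+1)) (p : ℕ) (hp : p ≤ n) : Fin (n - p) → Fin (n+1) :=
  fun t => π ⟨p + 1 + t.1, by have := t.isLt; omega⟩

lemma Lw_inj {n : ℕ} (π : Equiv.Perm (Fin (n+1))) (p : ℕ) (hp : p ≤ n) :
    Function.Injective (Lw ⇑π p hp) := by
  intro s t h
  have h2 := congrArg Fin.val (π.injective h)
  exact Fin.ext h2

lemma Rw_inj {n : ℕ} (π : Equiv.Perm (Fin (n+1))) (p : ℕ) (hp : p ≤ n) :
    Function.Injective (Rw ⇑π p hp) := by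
  intro s t h
  have h2 := congrArg Fin.val (π.injective h)
  simp only [] at h2
  exact Fin.ext (by omega)

lemma mw_decomp {k n : ℕ} {α : Fin k → Fin k} (π : Equiv.Perm (Fin (n+1))) (p : ℕ) (hp : p ≤ n)
    (hmax : π ⟨p, by omega⟩ = Fin.last n) :
    MW α ⇑π ↔ CW α (Lw ⇑π p hp) ∨ MW α (Rw ⇑π p hp) := by
  constructor
  · rintro ⟨i, j, hj, hij, hpat, hbig⟩
    rcases Nat.eq_zero_or_pos k with hk | hk
    · subst hk
      exact Or.inl ⟨0, by omega, fun a => a.elim0⟩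
    by_cases hjp : j = p
    · subst hjp
      exact Or.inl ⟨i, by omega, fun a b => hpat a b⟩
    · have hπj : (π ⟨j, hj⟩ : Fin (n+1)) < Fin.last n := by
        refine lt_of_le_of_ne (Fin.le_last _) fun he => hjp ?_
        exact congrArg Fin.val (π.injective (he.trans hmax.symm))
      have hne : ∀ a : Fin k, i + a.1 ≠ p := by
        intro a he
        have h1 := hbig a
        have h2 : π ⟨i + a.1, by have := a.isLt; omega⟩ = Fin.last n := by
          have h3 : (⟨i + a.1, by have := a.isLt; omega⟩ : Fin (n+1)) = ⟨p, by omega⟩ :=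
            Fin.ext he
          rw [h3]; exact hmax
        rw [h2] at h1
        exact absurd (h1.trans hπj) (lt_irrefl _)
      rcases (show i + k ≤ p ∨ p + 1 ≤ i by
          by_contra hcon
          push_neg at hcon
          exact hne ⟨p - i, by omega⟩ (show i + (p - i) = p by omega)) with hcase | hcase
      · exact Or.inl ⟨i, hcase, fun a b => hpat a b⟩
      · refine Or.inr ⟨i - (p+1), j - (p+1), by omega, by omega, fun a b => ?_, fun a => ?_⟩
        · have e1 : ∀ (c : Fin k), Rw ⇑π p hp ⟨i - (p+1) + c.1, by have := c.isLt; omega⟩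
              = π ⟨i + c.1, by have := c.isLt; omega⟩ := by
            intro c
            show π _ = π _
            congr 1
            exact Fin.ext (by simp only []; omega)
          rw [e1 a, e1 b]
          exact hpat a b
        · have e1 : Rw ⇑π p hp ⟨i - (p+1) + a.1, by have := a.isLt; omega⟩
              = π ⟨i + a.1, by have := a.isLt; omega⟩ := by
            show π _ = π _
            congr 1
            exact Fin.ext (by simp only []; omega)
          have e2 : Rw ⇑π p hp ⟨j - (p+1), by omega⟩ = π ⟨j, hj⟩ := by
            show π _ = π _
            congr 1
            exact Fin.ext (by simp only []; omega)
          rw [e1, e2]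
          exact hbig a
  · rintro (⟨i, hik, hpat⟩ | ⟨i, j, hj, hij, hpat, hbig⟩)
    · refine ⟨i, p, by omega, hik, fun a b => hpat a b, fun a => ?_⟩
      have h2 : π ⟨p, by omega⟩ = Fin.last n := hmax
      refine lt_of_le_of_ne (le_trans (Fin.le_last _) (le_of_eq h2.symm)) fun he => ?_
      have h3 := congrArg Fin.val (π.injective he)
      have := a.isLt
      simp only [] at h3
      omega
    · refine ⟨p + 1 + i, p + 1 + j, by omega, by omega, fun a b => ?_, fun a => ?_⟩
      · have e1 : ∀ (c : Fin k), π ⟨p + 1 + i + c.1, by have := c.isLt; omega⟩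
            = Rw ⇑π p hp ⟨i + c.1, by have := c.isLt; omega⟩ := by
          intro c
          show π _ = π _
          congr 1
          exact Fin.ext (by simp only []; omega)
        rw [e1 a, e1 b]
        exact hpat a b
      · have e1 : π ⟨p + 1 + i + a.1, by have := a.isLt; omega⟩
            = Rw ⇑π p hp ⟨i + a.1, by have := a.isLt; omega⟩ := by
          show π _ = π _
          congr 1
          exact Fin.ext (by simp only []; omega)
        have e2 : π ⟨p + 1 + j, by omega⟩ = Rw ⇑π p hp ⟨j, hj⟩ := rfl
        rw [e1, e2]
        exact hbig a


def blkE (p q : ℕ) : (Fin p ⊕ (Fin 1 ⊕ Fin q)) ≃ Fin (p + (1 + q)) :=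
  (Equiv.sumCongr (Equiv.refl _) finSumFinEquiv).trans finSumFinEquiv

def blkEE {n : ℕ} (p : ℕ) (hp : p ≤ n) : (Fin p ⊕ (Fin 1 ⊕ Fin (n - p))) ≃ Fin (n+1) :=
  (blkE p (n - p)).trans (finCongr (by omega))

lemma blkEE_inl {n p : ℕ} (hp : p ≤ n) (t : Fin p) :
    blkEE p hp (Sum.inl t) = ⟨t.1, by have := t.isLt; omega⟩ := by
  apply Fin.ext
  simp [blkEE, blkE, finSumFinEquiv_apply_left]

lemma blkEE_mid {n p : ℕ} (hp : p ≤ n) (z : Fin 1) :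
    blkEE p hp (Sum.inr (Sum.inl z)) = ⟨p, by omega⟩ := by
  apply Fin.ext
  have hz : z = 0 := Subsingleton.elim _ _
  subst hz
  simp [blkEE, blkE, finSumFinEquiv_apply_left, finSumFinEquiv_apply_right]

lemma blkEE_inr {n p : ℕ} (hp : p ≤ n) (t : Fin (n - p)) :
    blkEE p hp (Sum.inr (Sum.inr t)) = ⟨p + 1 + t.1, by have := t.isLt; omega⟩ := by
  apply Fin.ext
  simp [blkEE, blkE, finSumFinEquiv_apply_right]
  omega

def blk {n : ℕ} (p : ℕ) (hp : p ≤ n) (ρL : Equiv.Perm (Fin p)) (ρR : Equiv.Perm (Fin (n - p))) :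
    Equiv.Perm (Fin (n+1)) :=
  (blkEE p hp).permCongr (Equiv.sumCongr ρL (Equiv.sumCongr (Equiv.refl (Fin 1)) ρR))

lemma blk_apply_left {n p : ℕ} (hp : p ≤ n) (ρL : Equiv.Perm (Fin p))
    (ρR : Equiv.Perm (Fin (n - p))) {t : ℕ} (ht : t < p) :
    blk p hp ρL ρR ⟨t, by omega⟩
      = ⟨(ρL ⟨t, ht⟩).1, by have := (ρL ⟨t, ht⟩).isLt; omega⟩ := by
  have h1 : (blkEE p hp).symm ⟨t, by omega⟩ = Sum.inl ⟨t, ht⟩ := by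
    rw [Equiv.symm_apply_eq, blkEE_inl]
  unfold blk
  rw [Equiv.permCongr_apply, h1]
  simp only [Equiv.sumCongr_apply, Sum.map_inl]
  exact blkEE_inl hp _

lemma blk_apply_mid {n p : ℕ} (hp : p ≤ n) (ρL : Equiv.Perm (Fin p))
    (ρR : Equiv.Perm (Fin (n - p))) :
    blk p hp ρL ρR ⟨p, by omega⟩ = ⟨p, by omega⟩ := by
  have h1 : (blkEE p hp).symm ⟨p, by omega⟩ = Sum.inr (Sum.inl 0) := by
    rw [Equiv.symm_apply_eq, blkEE_mid]
  unfold blk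
  rw [Equiv.permCongr_apply, h1]
  simp only [Equiv.sumCongr_apply, Sum.map_inr, Sum.map_inl, Equiv.refl_apply]
  exact blkEE_mid hp _

lemma blk_apply_right {n p : ℕ} (hp : p ≤ n) (ρL : Equiv.Perm (Fin p))
    (ρR : Equiv.Perm (Fin (n - p))) {t : ℕ} (ht : t < n - p) :
    blk p hp ρL ρR ⟨p + 1 + t, by omega⟩
      = ⟨p + 1 + (ρR ⟨t, ht⟩).1, by have := (ρR ⟨t, ht⟩).isLt; omega⟩ := by
  have h1 : (blkEE p hp).symm ⟨p + 1 + t, by omega⟩ = Sum.inr (Sum.inr ⟨t, ht⟩) := by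
    rw [Equiv.symm_apply_eq, blkEE_inr]
  unfold blk
  rw [Equiv.permCongr_apply, h1]
  simp only [Equiv.sumCongr_apply, Sum.map_inr]
  exact blkEE_inr hp _

lemma blk_inv_comp {n p : ℕ} (hp : p ≤ n) {ρL ρL' : Equiv.Perm (Fin p)}
    {ρR ρR' : Equiv.Perm (Fin (n - p))}
    (h1 : ∀ t, ρL (ρL' t) = t) (h2 : ∀ t, ρR (ρR' t) = t) (x : Fin (n+1)) :
    blk p hp ρL ρR (blk p hp ρL' ρR' x) = x := by
  obtain ⟨xv, hx⟩ := x
  rcases show xv < p ∨ xv = p ∨ (p + 1 ≤ xv) by omega with hc | hc | hc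
  · rw [blk_apply_left hp ρL' ρR' hc, blk_apply_left hp ρL ρR (ρL' ⟨xv, hc⟩).isLt]
    apply Fin.ext
    simp only []
    rw [Fin.eta, h1]
  · subst hc
    rw [blk_apply_mid hp ρL' ρR', blk_apply_mid hp ρL ρR]
  · obtain ⟨t, rfl⟩ : ∃ t, xv = p + 1 + t := ⟨xv - p - 1, by omega⟩
    have ht : t < n - p := by omega
    rw [blk_apply_right hp ρL' ρR' ht, blk_apply_right hp ρL ρR (ρR' ⟨t, ht⟩).isLt]
    apply Fin.ext
    simp only []
    rw [Fin.eta, h2]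


variable {n : ℕ}

noncomputable def rhoL (gC : ∀ m : ℕ, Equiv.Perm (Fin m) → Equiv.Perm (Fin m))
    (π : Equiv.Perm (Fin (n+1))) (p : ℕ) (hp : p ≤ n) : Equiv.Perm (Fin p) :=
  (stdP (Lw ⇑π p hp) (Lw_inj π p hp))⁻¹ * gC p (stdP (Lw ⇑π p hp) (Lw_inj π p hp))

noncomputable def rhoR (gM : ∀ m : ℕ, Equiv.Perm (Fin m) → Equiv.Perm (Fin m))
    (π : Equiv.Perm (Fin (n+1))) (p : ℕ) (hp : p ≤ n) : Equiv.Perm (Fin (n - p)) :=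
  (stdP (Rw ⇑π p hp) (Rw_inj π p hp))⁻¹ * gM (n - p) (stdP (Rw ⇑π p hp) (Rw_inj π p hp))

noncomputable def twistAux (gC gM : ∀ m : ℕ, Equiv.Perm (Fin m) → Equiv.Perm (Fin m))
    (π : Equiv.Perm (Fin (n+1))) (p : ℕ) (hp : p ≤ n) : Equiv.Perm (Fin (n+1)) :=
  π * blk p hp (rhoL gC π p hp) (rhoR gM π p hp)

lemma twistAux_congr (gC gM : ∀ m : ℕ, Equiv.Perm (Fin m) → Equiv.Perm (Fin m))
    (π : Equiv.Perm (Fin (n+1))) {p q : ℕ} (hpq : p = q) (hp : p ≤ n) (hq : q ≤ n) :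
    twistAux gC gM π p hp = twistAux gC gM π q hq := by subst hpq; rfl

lemma Lw_twistAux (gC gM : ∀ m : ℕ, Equiv.Perm (Fin m) → Equiv.Perm (Fin m))
    (π : Equiv.Perm (Fin (n+1))) (p : ℕ) (hp : p ≤ n) :
    Lw ⇑(twistAux gC gM π p hp) p hp = Lw ⇑π p hp ∘ ⇑(rhoL gC π p hp) := by
  funext t
  show (π * blk p hp (rhoL gC π p hp) (rhoR gM π p hp)) ⟨t.1, _⟩ = _
  rw [Equiv.Perm.mul_apply, blk_apply_left hp _ _ t.isLt]
  rfl

lemma Rw_twistAux (gC gM : ∀ m : ℕ, Equiv.Perm (Fin m) → Equiv.Perm (Fin m))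
    (π : Equiv.Perm (Fin (n+1))) (p : ℕ) (hp : p ≤ n) :
    Rw ⇑(twistAux gC gM π p hp) p hp = Rw ⇑π p hp ∘ ⇑(rhoR gM π p hp) := by
  funext t
  show (π * blk p hp (rhoL gC π p hp) (rhoR gM π p hp)) ⟨p + 1 + t.1, _⟩ = _
  rw [Equiv.Perm.mul_apply, blk_apply_right hp _ _ t.isLt]
  rfl

lemma twistAux_max (gC gM : ∀ m : ℕ, Equiv.Perm (Fin m) → Equiv.Perm (Fin m))
    (π : Equiv.Perm (Fin (n+1))) (p : ℕ) (hp : p ≤ n) :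
    twistAux gC gM π p hp ⟨p, by omega⟩ = π ⟨p, by omega⟩ := by
  show (π * blk p hp (rhoL gC π p hp) (rhoR gM π p hp)) ⟨p, _⟩ = _
  rw [Equiv.Perm.mul_apply, blk_apply_mid hp]

lemma stdP_Lw_twistAux (gC gM : ∀ m : ℕ, Equiv.Perm (Fin m) → Equiv.Perm (Fin m))
    (π : Equiv.Perm (Fin (n+1))) (p : ℕ) (hp : p ≤ n) :
    stdP (Lw ⇑(twistAux gC gM π p hp) p hp) (Lw_inj _ p hp)
      = gC p (stdP (Lw ⇑π p hp) (Lw_inj π p hp)) := by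
  rw [stdP_congr (Lw_twistAux gC gM π p hp) (Lw_inj _ p hp)
    ((Lw_inj π p hp).comp (Equiv.injective _))]
  rw [stdP_comp _ (Lw_inj π p hp)]
  unfold rhoL
  exact mul_inv_cancel_left _ _

lemma stdP_Rw_twistAux (gC gM : ∀ m : ℕ, Equiv.Perm (Fin m) → Equiv.Perm (Fin m))
    (π : Equiv.Perm (Fin (n+1))) (p : ℕ) (hp : p ≤ n) :
    stdP (Rw ⇑(twistAux gC gM π p hp) p hp) (Rw_inj _ p hp)
      = gM (n - p) (stdP (Rw ⇑π p hp) (Rw_inj π p hp)) := by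
  rw [stdP_congr (Rw_twistAux gC gM π p hp) (Rw_inj _ p hp)
    ((Rw_inj π p hp).comp (Equiv.injective _))]
  rw [stdP_comp _ (Rw_inj π p hp)]
  unfold rhoR
  exact mul_inv_cancel_left _ _

lemma avoid_parts {k : ℕ} {α : Fin k → Fin k} (π : Equiv.Perm (Fin (n+1))) (p : ℕ) (hp : p ≤ n)
    (hmax : π ⟨p, by omega⟩ = Fin.last n) (hπ : ¬ MW α ⇑π) :
    ¬ CW α ⇑(stdP (Lw ⇑π p hp) (Lw_inj π p hp))
      ∧ ¬ MW α ⇑(stdP (Rw ⇑π p hp) (Rw_inj π p hp)) := by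
  rw [mw_decomp π p hp hmax] at hπ
  obtain ⟨h1, h2⟩ := not_or.mp hπ
  exact ⟨fun hc => h1 ((cw_congr (stdF_lt_iff _ (Lw_inj π p hp))).mpr hc),
    fun hc => h2 ((mw_congr (stdF_lt_iff _ (Rw_inj π p hp))).mpr hc)⟩

lemma twistAux_avoid {k : ℕ} {α β : Fin k → Fin k}
    (gC gM : ∀ m : ℕ, Equiv.Perm (Fin m) → Equiv.Perm (Fin m))
    (π : Equiv.Perm (Fin (n+1))) (p : ℕ) (hp : p ≤ n)
    (hmax : π ⟨p, by omega⟩ = Fin.last n) (hπ : ¬ MW α ⇑π)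
    (hgC : ∀ m (σ : Equiv.Perm (Fin m)), ¬ CW α ⇑σ → ¬ CW β ⇑(gC m σ))
    (hgM : ∀ m, m ≤ n → ∀ (σ : Equiv.Perm (Fin m)), ¬ MW α ⇑σ → ¬ MW β ⇑(gM m σ)) :
    ¬ MW β ⇑(twistAux gC gM π p hp) := by
  have hmax' : twistAux gC gM π p hp ⟨p, by omega⟩ = Fin.last n := by
    rw [twistAux_max]; exact hmax
  rw [mw_decomp _ p hp hmax']
  refine not_or.mpr ⟨fun hc => ?_, fun hc => ?_⟩
  · have h5 : CW β ⇑(stdP (Lw ⇑(twistAux gC gM π p hp) p hp) (Lw_inj _ p hp)) :=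
      (cw_congr (stdF_lt_iff _ (Lw_inj _ p hp))).mp hc
    rw [stdP_Lw_twistAux] at h5
    exact hgC p _ (avoid_parts π p hp hmax hπ).1 h5
  · have h5 : MW β ⇑(stdP (Rw ⇑(twistAux gC gM π p hp) p hp) (Rw_inj _ p hp)) :=
      (mw_congr (stdF_lt_iff _ (Rw_inj _ p hp))).mp hc
    rw [stdP_Rw_twistAux] at h5
    exact hgM (n - p) (Nat.sub_le n p) _ (avoid_parts π p hp hmax hπ).2 h5

lemma twistAux_twistAux (gC gM gC' gM' : ∀ m : ℕ, Equiv.Perm (Fin m) → Equiv.Perm (Fin m))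
    (π : Equiv.Perm (Fin (n+1))) (p : ℕ) (hp : p ≤ n)
    (hC : gC' p (gC p (stdP (Lw ⇑π p hp) (Lw_inj π p hp))) = stdP (Lw ⇑π p hp) (Lw_inj π p hp))
    (hM : gM' (n - p) (gM (n - p) (stdP (Rw ⇑π p hp) (Rw_inj π p hp)))
      = stdP (Rw ⇑π p hp) (Rw_inj π p hp)) :
    twistAux gC' gM' (twistAux gC gM π p hp) p hp = π := by
  have hL : rhoL gC' (twistAux gC gM π p hp) p hp
      = (gC p (stdP (Lw ⇑π p hp) (Lw_inj π p hp)))⁻¹ * stdP (Lw ⇑π p hp) (Lw_inj π p hp) := by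
    unfold rhoL
    rw [stdP_Lw_twistAux, hC]
  have hR : rhoR gM' (twistAux gC gM π p hp) p hp
      = (gM (n - p) (stdP (Rw ⇑π p hp) (Rw_inj π p hp)))⁻¹
        * stdP (Rw ⇑π p hp) (Rw_inj π p hp) := by
    unfold rhoR
    rw [stdP_Rw_twistAux, hM]
  apply Equiv.ext; intro x
  show (twistAux gC gM π p hp * blk p hp (rhoL gC' (twistAux gC gM π p hp) p hp)
    (rhoR gM' (twistAux gC gM π p hp) p hp)) x = π x
  rw [hL, hR, Equiv.Perm.mul_apply]
  show (π * blk p hp (rhoL gC π p hp) (rhoR gM π p hp)) _ = π x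
  rw [Equiv.Perm.mul_apply]
  congr 1
  apply blk_inv_comp
  · intro t
    unfold rhoL
    simp [Equiv.Perm.mul_apply]
  · intro t
    unfold rhoR
    simp [Equiv.Perm.mul_apply]

noncomputable def Phi (gC gM : ∀ m : ℕ, Equiv.Perm (Fin m) → Equiv.Perm (Fin m)) :
    Equiv.Perm (Fin (n+1)) → Equiv.Perm (Fin (n+1)) :=
  fun π => twistAux gC gM π (π.symm (Fin.last n)).val
    (Nat.lt_succ_iff.mp (π.symm (Fin.last n)).isLt)

lemma pos_spec (π : Equiv.Perm (Fin (n+1))) :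
    π ⟨(π.symm (Fin.last n)).val, by omega⟩ = Fin.last n := by
  show π (π.symm (Fin.last n)) = Fin.last n
  exact π.apply_symm_apply _

lemma Phi_eq (gC gM : ∀ m : ℕ, Equiv.Perm (Fin m) → Equiv.Perm (Fin m))
    (π : Equiv.Perm (Fin (n+1))) {p : ℕ} (hp : p ≤ n) (h : (π.symm (Fin.last n)).val = p) :
    Phi gC gM π = twistAux gC gM π p hp :=
  twistAux_congr gC gM π h _ _

lemma Phi_avoid {k : ℕ} {α β : Fin k → Fin k}
    (gC gM : ∀ m : ℕ, Equiv.Perm (Fin m) → Equiv.Perm (Fin m))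
    (π : Equiv.Perm (Fin (n+1))) (hπ : ¬ MW α ⇑π)
    (hgC : ∀ m (σ : Equiv.Perm (Fin m)), ¬ CW α ⇑σ → ¬ CW β ⇑(gC m σ))
    (hgM : ∀ m, m ≤ n → ∀ (σ : Equiv.Perm (Fin m)), ¬ MW α ⇑σ → ¬ MW β ⇑(gM m σ)) :
    ¬ MW β ⇑(Phi gC gM π) :=
  twistAux_avoid gC gM π _ _ (pos_spec π) hπ hgC hgM

lemma Phi_Phi {k : ℕ} {α : Fin k → Fin k}
    (gC gM gC' gM' : ∀ m : ℕ, Equiv.Perm (Fin m) → Equiv.Perm (Fin m))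
    (π : Equiv.Perm (Fin (n+1))) (hπ : ¬ MW α ⇑π)
    (hCinv : ∀ m (σ : Equiv.Perm (Fin m)), ¬ CW α ⇑σ → gC' m (gC m σ) = σ)
    (hMinv : ∀ m (σ : Equiv.Perm (Fin m)), ¬ MW α ⇑σ → gM' m (gM m σ) = σ) :
    Phi gC' gM' (Phi gC gM π) = π := by
  have hp : (π.symm (Fin.last n)).val ≤ n := Nat.lt_succ_iff.mp (π.symm (Fin.last n)).isLt
  have hmax := pos_spec π
  have h1 : Phi gC gM π = twistAux gC gM π (π.symm (Fin.last n)).val hp :=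
    Phi_eq gC gM π hp rfl
  have hmax' : twistAux gC gM π (π.symm (Fin.last n)).val hp ⟨(π.symm (Fin.last n)).val,
      by omega⟩ = Fin.last n := by
    rw [twistAux_max]; exact hmax
  have hval : ((twistAux gC gM π (π.symm (Fin.last n)).val hp).symm (Fin.last n)).val
      = (π.symm (Fin.last n)).val := by
    have h2 : (twistAux gC gM π (π.symm (Fin.last n)).val hp).symm (Fin.last n)
        = ⟨(π.symm (Fin.last n)).val, by omega⟩ := by
      rw [Equiv.symm_apply_eq]; exact hmax'.symm
    rw [h2]
  rw [h1, Phi_eq gC' gM' _ hp hval]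
  have hparts := avoid_parts π (π.symm (Fin.last n)).val hp hmax hπ
  exact twistAux_twistAux gC gM gC' gM' π _ hp
    (hCinv _ _ hparts.1) (hMinv _ _ hparts.2)


theorem main (k : ℕ) (α β : Fin k → Fin k)
    (hα : Function.Bijective α) (hβ : Function.Bijective β)
    (hwe : ∀ m : ℕ, Nat.card {π : Equiv.Perm (Fin m) // ¬ ContainsConsec α ⇑π} =
      Nat.card {π : Equiv.Perm (Fin m) // ¬ ContainsConsec β ⇑π}) :
    ∀ n : ℕ, Nat.card {π : Equiv.Perm (Fin n) // ¬ ContainsConsecMax α ⇑π} =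
      Nat.card {π : Equiv.Perm (Fin n) // ¬ ContainsConsecMax β ⇑π} := by
  intro n
  induction n using Nat.strong_induction_on with
  | _ n IH =>
    cases n with
    | zero =>
      have h0 : ∀ (γ : Fin k → Fin k),
          {π : Equiv.Perm (Fin 0) // ¬ ContainsConsecMax γ ⇑π} ≃ Equiv.Perm (Fin 0) :=
        fun γ => Equiv.subtypeUnivEquiv (fun π => by rintro ⟨i, j, hj, -⟩; omega)
      rw [Nat.card_congr (h0 α), Nat.card_congr (h0 β)]
    | succ n =>
      classical
      have EC : ∀ m : ℕ, {σ : Equiv.Perm (Fin m) // ¬ ContainsConsec α ⇑σ}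
          ≃ {σ : Equiv.Perm (Fin m) // ¬ ContainsConsec β ⇑σ} :=
        fun m => (Finite.card_eq.mp (hwe m)).some
      have EM : ∀ m, m ≤ n → ({σ : Equiv.Perm (Fin m) // ¬ ContainsConsecMax α ⇑σ}
          ≃ {σ : Equiv.Perm (Fin m) // ¬ ContainsConsecMax β ⇑σ}) :=
        fun m hm => (Finite.card_eq.mp (IH m (by omega))).some
      set gC : ∀ m : ℕ, Equiv.Perm (Fin m) → Equiv.Perm (Fin m) :=
        fun m σ => if h : ¬ ContainsConsec α ⇑σ then ((EC m) ⟨σ, h⟩).1 else σ with hgCdef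
      set gC' : ∀ m : ℕ, Equiv.Perm (Fin m) → Equiv.Perm (Fin m) :=
        fun m σ => if h : ¬ ContainsConsec β ⇑σ then ((EC m).symm ⟨σ, h⟩).1 else σ with hgC'def
      set gM : ∀ m : ℕ, Equiv.Perm (Fin m) → Equiv.Perm (Fin m) :=
        fun m σ => if hm : m ≤ n then
          (if h : ¬ ContainsConsecMax α ⇑σ then ((EM m hm) ⟨σ, h⟩).1 else σ) else σ with hgMdef
      set gM' : ∀ m : ℕ, Equiv.Perm (Fin m) → Equiv.Perm (Fin m) :=
        fun m σ => if hm : m ≤ n then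
          (if h : ¬ ContainsConsecMax β ⇑σ then ((EM m hm).symm ⟨σ, h⟩).1 else σ) else σ
        with hgM'def
      have hgC : ∀ m (σ : Equiv.Perm (Fin m)), ¬ CW α ⇑σ → ¬ CW β ⇑(gC m σ) := by
        intro m σ h
        show ¬ CW β ⇑(if h' : ¬ ContainsConsec α ⇑σ then ((EC m) ⟨σ, h'⟩).1 else σ)
        rw [dif_pos (show ¬ ContainsConsec α ⇑σ from h)]
        exact ((EC m) ⟨σ, h⟩).2
      have hgC' : ∀ m (σ : Equiv.Perm (Fin m)), ¬ CW β ⇑σ → ¬ CW α ⇑(gC' m σ) := by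
        intro m σ h
        show ¬ CW α ⇑(if h' : ¬ ContainsConsec β ⇑σ then ((EC m).symm ⟨σ, h'⟩).1 else σ)
        rw [dif_pos (show ¬ ContainsConsec β ⇑σ from h)]
        exact ((EC m).symm ⟨σ, h⟩).2
      have hgM : ∀ m, m ≤ n → ∀ (σ : Equiv.Perm (Fin m)), ¬ MW α ⇑σ → ¬ MW β ⇑(gM m σ) := by
        intro m hm σ h
        show ¬ MW β ⇑(if hm' : m ≤ n then
          (if h' : ¬ ContainsConsecMax α ⇑σ then ((EM m hm') ⟨σ, h'⟩).1 else σ) else σ)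
        rw [dif_pos hm, dif_pos (show ¬ ContainsConsecMax α ⇑σ from h)]
        exact ((EM m hm) ⟨σ, h⟩).2
      have hgM' : ∀ m, m ≤ n → ∀ (σ : Equiv.Perm (Fin m)), ¬ MW β ⇑σ → ¬ MW α ⇑(gM' m σ) := by
        intro m hm σ h
        show ¬ MW α ⇑(if hm' : m ≤ n then
          (if h' : ¬ ContainsConsecMax β ⇑σ then ((EM m hm').symm ⟨σ, h'⟩).1 else σ) else σ)
        rw [dif_pos hm, dif_pos (show ¬ ContainsConsecMax β ⇑σ from h)]
        exact ((EM m hm).symm ⟨σ, h⟩).2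
      have hCinv : ∀ m (σ : Equiv.Perm (Fin m)), ¬ CW α ⇑σ → gC' m (gC m σ) = σ := by
        intro m σ h
        have h0 : ¬ ContainsConsec α ⇑σ := h
        show (if h' : ¬ ContainsConsec β ⇑(gC m σ) then ((EC m).symm ⟨gC m σ, h'⟩).1 else _) = σ
        have h1 : gC m σ = ((EC m) ⟨σ, h0⟩).1 := by
          show (if h' : ¬ ContainsConsec α ⇑σ then ((EC m) ⟨σ, h'⟩).1 else σ) = _
          rw [dif_pos h0]
        have h2 : ¬ ContainsConsec β ⇑(gC m σ) := by rw [h1]; exact ((EC m) ⟨σ, h0⟩).2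
        rw [dif_pos h2]
        have h3 : (⟨gC m σ, h2⟩ : {σ : Equiv.Perm (Fin m) // ¬ ContainsConsec β ⇑σ})
            = (EC m) ⟨σ, h0⟩ := Subtype.ext h1
        rw [h3, Equiv.symm_apply_apply]
      have hCinv' : ∀ m (σ : Equiv.Perm (Fin m)), ¬ CW β ⇑σ → gC m (gC' m σ) = σ := by
        intro m σ h
        have h0 : ¬ ContainsConsec β ⇑σ := h
        show (if h' : ¬ ContainsConsec α ⇑(gC' m σ) then ((EC m) ⟨gC' m σ, h'⟩).1 else _) = σ
        have h1 : gC' m σ = ((EC m).symm ⟨σ, h0⟩).1 := by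
          show (if h' : ¬ ContainsConsec β ⇑σ then ((EC m).symm ⟨σ, h'⟩).1 else σ) = _
          rw [dif_pos h0]
        have h2 : ¬ ContainsConsec α ⇑(gC' m σ) := by
          rw [h1]; exact ((EC m).symm ⟨σ, h0⟩).2
        rw [dif_pos h2]
        have h3 : (⟨gC' m σ, h2⟩ : {σ : Equiv.Perm (Fin m) // ¬ ContainsConsec α ⇑σ})
            = (EC m).symm ⟨σ, h0⟩ := Subtype.ext h1
        rw [h3, Equiv.apply_symm_apply]
      have hMinv : ∀ m (σ : Equiv.Perm (Fin m)), ¬ MW α ⇑σ → gM' m (gM m σ) = σ := by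
        intro m σ h
        have h0 : ¬ ContainsConsecMax α ⇑σ := h
        by_cases hm : m ≤ n
        · show (if hm' : m ≤ n then (if h' : ¬ ContainsConsecMax β ⇑(gM m σ) then
              ((EM m hm').symm ⟨gM m σ, h'⟩).1 else gM m σ) else gM m σ) = σ
          have h1 : gM m σ = ((EM m hm) ⟨σ, h0⟩).1 := by
            show (if hm' : m ≤ n then (if h' : ¬ ContainsConsecMax α ⇑σ then
                ((EM m hm') ⟨σ, h'⟩).1 else σ) else σ) = _
            rw [dif_pos hm, dif_pos h0]
          have h2 : ¬ ContainsConsecMax β ⇑(gM m σ) := by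
            rw [h1]; exact ((EM m hm) ⟨σ, h0⟩).2
          rw [dif_pos hm, dif_pos h2]
          have h3 : (⟨gM m σ, h2⟩ : {σ : Equiv.Perm (Fin m) // ¬ ContainsConsecMax β ⇑σ})
              = (EM m hm) ⟨σ, h0⟩ := Subtype.ext h1
          rw [h3, Equiv.symm_apply_apply]
        · show (if hm' : m ≤ n then _ else gM m σ) = σ
          rw [dif_neg hm]
          show (if hm' : m ≤ n then _ else σ) = σ
          rw [dif_neg hm]
      have hMinv' : ∀ m (σ : Equiv.Perm (Fin m)), ¬ MW β ⇑σ → gM m (gM' m σ) = σ := by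
        intro m σ h
        have h0 : ¬ ContainsConsecMax β ⇑σ := h
        by_cases hm : m ≤ n
        · show (if hm' : m ≤ n then (if h' : ¬ ContainsConsecMax α ⇑(gM' m σ) then
              ((EM m hm') ⟨gM' m σ, h'⟩).1 else gM' m σ) else gM' m σ) = σ
          have h1 : gM' m σ = ((EM m hm).symm ⟨σ, h0⟩).1 := by
            show (if hm' : m ≤ n then (if h' : ¬ ContainsConsecMax β ⇑σ then
                ((EM m hm').symm ⟨σ, h'⟩).1 else σ) else σ) = _
            rw [dif_pos hm, dif_pos h0]
          have h2 : ¬ ContainsConsecMax α ⇑(gM' m σ) := by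
            rw [h1]; exact ((EM m hm).symm ⟨σ, h0⟩).2
          rw [dif_pos hm, dif_pos h2]
          have h3 : (⟨gM' m σ, h2⟩ : {σ : Equiv.Perm (Fin m) // ¬ ContainsConsecMax α ⇑σ})
              = (EM m hm).symm ⟨σ, h0⟩ := Subtype.ext h1
          rw [h3, Equiv.apply_symm_apply]
        · show (if hm' : m ≤ n then _ else gM' m σ) = σ
          rw [dif_neg hm]
          show (if hm' : m ≤ n then _ else σ) = σ
          rw [dif_neg hm]
      exact Nat.card_congr
        { toFun := fun x => ⟨Phi gC gM x.1, Phi_avoid gC gM x.1 x.2 hgC hgM⟩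
          invFun := fun y => ⟨Phi gC' gM' y.1, Phi_avoid gC' gM' y.1 y.2 hgC' hgM'⟩
          left_inv := fun x => Subtype.ext (Phi_Phi gC gM gC' gM' x.1 x.2 hCinv hMinv)
          right_inv := fun y => Subtype.ext (Phi_Phi gC' gM' gC gM y.1 y.2 hCinv' hMinv') }


end WilfAux2

/-- If two consecutive patterns `α, β` of length `k` are Wilf-equivalent, then
so are the vincular patterns `α-(k+1)` and `β-(k+1)` (Kitaev, Elizalde); in
particular `2341-5` and `1342-5` are Wilf-equivalent since `2341 ≡ 1342`. -/
theorem consec_wilf_extends_to_dashedMax (k : ℕ) (α β : Fin k → Fin k)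
    (hα : Function.Bijective α) (hβ : Function.Bijective β)
    (hwe : ∀ m : ℕ, Nat.card {π : Equiv.Perm (Fin m) // ¬ ContainsConsec α ⇑π} =
      Nat.card {π : Equiv.Perm (Fin m) // ¬ ContainsConsec β ⇑π}) :
    ∀ n : ℕ, Nat.card {π : Equiv.Perm (Fin n) // ¬ ContainsConsecMax α ⇑π} =
      Nat.card {π : Equiv.Perm (Fin n) // ¬ ContainsConsecMax β ⇑π} :=
  WilfAux2.main k α β hα hβ hwe
end
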